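/- arXiv:1309.4689 — 16 statements merged into one kernel-verified Lean document; each statement's English description precedes it below -/
import Mathlib

section
/- Let A be a generalized almost-Jordan algebra for (β, γ) over F, M an F-vector space, and ρ : A → End_F(M) a linear map. Then ρ is a representation of A if and only if for all a, b ∈ A the following two operator identities hold on M: (β+γ)ρ_a³ − β ρ_a∘ρ_{a²} − γ ρ_{a³} = 0, and (β+γ)(ρ_a∘ρ_{ab} + ρ_a²∘ρ_b + ρ_{(ab)a}) − β(2 ρ_a∘ρ_b∘ρ_a + ρ_{a²b}) − γ(2 ρ_b∘ρ_a² + ρ_b∘ρ_{a²}) = 0, where ρ_a² = ρ_a∘ρ_a and ρ_a³ = ρ_a∘ρ_a∘ρ_a. -/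
/-- The generalized almost-Jordan identity for `(β, γ)` with respect to a
multiplication `mul` on an `F`-vector space `X`:
`β((y·x²)·x − ((y·x)·x)·x) + γ(y·x³ − ((y·x)·x)·x) = 0` for all `x y`,
where `x² = x·x` and `x³ = x²·x`. -/
def IsGAJ (F : Type*) [Field F] {X : Type*} [AddCommGroup X] [Module F X]
    (β γ : F) (mul : X → X → X) : Prop :=
  ∀ x y : X,
    β • (mul (mul y (mul x x)) x - mul (mul (mul y x) x) x) +
      γ • (mul y (mul (mul x x) x) - mul (mul (mul y x) x) x) = 0

/-- The split null extension multiplication on `A × M` induced by a linear map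
`ρ : A →ₗ[F] Module.End F M`: `(a + m)(b + n) = ab + ρ(a)(n) + ρ(b)(m)`. -/
def sneMul (F : Type*) [Field F] {A M : Type*} [NonUnitalNonAssocRing A] [Module F A]
    [AddCommGroup M] [Module F M] (ρ : A →ₗ[F] Module.End F M) :
    A × M → A × M → A × M :=
  fun p q => (p.1 * q.1, ρ p.1 q.2 + ρ q.1 p.2)

/-- `ρ` is a representation of `A` for `(β, γ)`: the split null extension
`A ⊕ M` satisfies the generalized almost-Jordan identity for `(β, γ)`. -/
def IsRep (F : Type*) [Field F] {A M : Type*} [NonUnitalNonAssocRing A] [Module F A]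
    [AddCommGroup M] [Module F M] (β γ : F) (ρ : A →ₗ[F] Module.End F M) : Prop :=
  IsGAJ F β γ (sneMul F ρ)

/-- `ρ` is an irreducible representation: `M ≠ 0` and the only subspaces of `M`
invariant under all `ρ a` are `{0}` and `M`. -/
def IsIrreducibleRep (F : Type*) [Field F] {A M : Type*} [NonUnitalNonAssocRing A]
    [Module F A] [AddCommGroup M] [Module F M] (ρ : A →ₗ[F] Module.End F M) : Prop :=
  Nontrivial M ∧ ∀ N : Submodule F M, (∀ a : A, ∀ m ∈ N, ρ a m ∈ N) → N = ⊥ ∨ N = ⊤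

/-- `A_i·M_j`: the linear span of `{ρ_a(m) : a ∈ A_i, m ∈ M_j}`, where
`A_i = {a | e·a = i•a}` and `M_j = {m | ρ_e(m) = j•m}`. -/
def actSpan (F : Type*) [Field F] {A M : Type*} [NonUnitalNonAssocRing A] [Module F A]
    [AddCommGroup M] [Module F M] (ρ : A →ₗ[F] Module.End F M) (e : A) (i j : F) :
    Submodule F M :=
  Submodule.span F {x : M | ∃ a : A, e * a = i • a ∧ ∃ m : M, ρ e m = j • m ∧ ρ a m = x}

theorem stmt0 {F : Type*} [Field F] [Infinite F]
    (hchar2 : (2 : F) ≠ 0) (hchar3 : (3 : F) ≠ 0)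
    {A M : Type*} [NonUnitalNonAssocRing A] [Module F A]
    [SMulCommClass F A A] [IsScalarTower F A A]
    [AddCommGroup M] [Module F M]
    {β γ : F} (hβγ : (β, γ) ≠ (0, 0))
    (hcomm : ∀ x y : A, x * y = y * x)
    (hA : IsGAJ F β γ (fun x y : A => x * y))
    (ρ : A →ₗ[F] Module.End F M) :
    IsRep F β γ ρ ↔
      ∀ a b : A,
        ((β + γ) • (ρ a * ρ a * ρ a) - β • (ρ a * ρ (a * a)) - γ • ρ ((a * a) * a) = 0 ∧
          (β + γ) • (ρ a * ρ (a * b) + ρ a * ρ a * ρ b + ρ ((a * b) * a)) -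
              β • ((2 : F) • (ρ a * ρ b * ρ a) + ρ ((a * a) * b)) -
              γ • ((2 : F) • (ρ b * (ρ a * ρ a)) + ρ b * ρ (a * a)) = 0) := by
  constructor
  · intro h a b
    constructor
    · apply LinearMap.ext; intro n
      have h1 := h (a, 0) (0, n)
      simp only [IsGAJ, sneMul, Prod.mk.injEq, Prod.ext_iff, map_zero, Prod.smul_mk,
        Prod.fst_add, Prod.snd_add, Prod.smul_fst, Prod.smul_snd, Prod.fst_sub, Prod.snd_sub,
        LinearMap.zero_apply, zero_add, add_zero, map_add, LinearMap.add_apply,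
        Prod.fst_zero, Prod.snd_zero] at h1
      have h1' := h1.2
      simp only [LinearMap.sub_apply, LinearMap.smul_apply, Module.End.mul_apply,
        LinearMap.add_apply, LinearMap.zero_apply, smul_add, smul_sub]
      linear_combination (norm := module) -h1'
    · apply LinearMap.ext; intro m
      have h2 := h (a, m) (b, 0)
      simp only [IsGAJ, sneMul, Prod.mk.injEq, Prod.ext_iff, map_zero, Prod.smul_mk,
        Prod.fst_add, Prod.snd_add, Prod.smul_fst, Prod.smul_snd, Prod.fst_sub, Prod.snd_sub,
        LinearMap.zero_apply, zero_add, add_zero, map_add, LinearMap.add_apply, map_smul,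
        LinearMap.smul_apply, two_smul, hcomm b a, hcomm b (a * a),
        Prod.fst_zero, Prod.snd_zero] at h2
      have h2' := h2.2
      simp only [LinearMap.sub_apply, LinearMap.smul_apply, Module.End.mul_apply,
        LinearMap.add_apply, LinearMap.zero_apply, smul_add, smul_sub, two_smul]
      linear_combination (norm := module) -h2'
  · intro h
    rintro ⟨a, m⟩ ⟨b, n⟩
    have h1 := DFunLike.congr_fun (h a b).1 n
    have h2 := DFunLike.congr_fun (h a b).2 m
    simp only [LinearMap.sub_apply, LinearMap.smul_apply, Module.End.mul_apply,
      LinearMap.add_apply, LinearMap.zero_apply, smul_add, smul_sub, two_smul] at h1 h2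
    have hAab := hA a b
    simp only [hcomm b a, hcomm b (a * a)] at hAab
    simp only [sneMul, Prod.mk.injEq, Prod.ext_iff, Prod.smul_mk,
      Prod.fst_add, Prod.snd_add, Prod.smul_fst, Prod.smul_snd, Prod.fst_sub, Prod.snd_sub,
      map_add, LinearMap.add_apply, map_smul, LinearMap.smul_apply, two_smul,
      hcomm b a, hcomm b (a * a),
      Prod.fst_zero, Prod.snd_zero]
    refine ⟨hAab, ?_⟩
    linear_combination (norm := module) -h1 - h2
end

section
/- Let A be a generalized almost-Jordan algebra for (β, γ) with γ ≠ 0, β + γ ≠ 0 and β + 2γ ≠ 0, let e ≠ 0 be an idempotent of A, and let ρ : A → End_F(M) be a representation of A. Set λ = −γ/(β+γ). Then M decomposes as the internal direct sum M = M₀ ⊕ M₁ ⊕ M_λ, where M_i = {m ∈ M : ρ_e(m) = i m} for i ∈ {0, 1, λ}. -/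
theorem stmt1 {F : Type*} [Field F] [Infinite F]
    (hchar2 : (2 : F) ≠ 0) (hchar3 : (3 : F) ≠ 0)
    {A M : Type*} [NonUnitalNonAssocRing A] [Module F A]
    [SMulCommClass F A A] [IsScalarTower F A A]
    [AddCommGroup M] [Module F M]
    {β γ : F} (hβγ : (β, γ) ≠ (0, 0))
    (hcomm : ∀ x y : A, x * y = y * x)
    (hA : IsGAJ F β γ (fun x y : A => x * y))
    (ρ : A →ₗ[F] Module.End F M)
    (hγ : γ ≠ 0) (hβγ1 : β + γ ≠ 0) (hβ2γ : β + 2 * γ ≠ 0)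
    (e : A) (he : e * e = e) (hne : e ≠ 0)
    (hρ : IsRep F β γ ρ) :
    DirectSum.IsInternal (fun i : Fin 3 =>
      Module.End.eigenspace (ρ e) (![(0 : F), 1, -γ / (β + γ)] i)) := by
  obtain ⟨l, hl⟩ : ∃ l : F, l = -γ / (β + γ) := ⟨_, rfl⟩
  rw [show (![(0 : F), 1, -γ / (β + γ)]) = ![(0 : F), 1, l] by rw [hl]]
  have hl0 : l ≠ 0 := by rw [hl]; exact div_ne_zero (neg_ne_zero.mpr hγ) hβγ1
  have hl1 : l ≠ 1 := by
    intro h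
    rw [hl, div_eq_one_iff_eq hβγ1] at h
    apply hβ2γ
    linear_combination -h
  -- derive the cubic identity
  have hcub : ∀ m : M, (β + γ) • ρ e (ρ e (ρ e m)) = β • ρ e (ρ e m) + γ • ρ e m := by
    intro m
    have h := hρ (e, 0) (0, m)
    simp only [sneMul, he, mul_zero, zero_mul, map_zero, LinearMap.zero_apply,
      add_zero, zero_add, Prod.smul_mk, Prod.mk_add_mk, Prod.mk_sub_mk,
      Prod.mk_eq_zero, smul_zero, Prod.ext_iff, Prod.snd_zero, Prod.fst_zero] at h
    have h2 := h.2
    have key : (β + γ) • ρ e (ρ e (ρ e m)) - (β • ρ e (ρ e m) + γ • ρ e m)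
        = -(β • (ρ e (ρ e m) - ρ e (ρ e (ρ e m))) + γ • (ρ e m - ρ e (ρ e (ρ e m)))) := by
      module
    rw [h2, neg_zero, sub_eq_zero] at key
    exact key
  have h3 : ∀ m : M, ρ e (ρ e (ρ e m))
      = ((β + γ)⁻¹ * β) • ρ e (ρ e m) + ((β + γ)⁻¹ * γ) • ρ e m := by
    intro m
    have := congrArg (fun z => (β + γ)⁻¹ • z) (hcub m)
    simpa [smul_smul, smul_add, inv_mul_cancel₀ hβγ1] using this
  rw [DirectSum.isInternal_submodule_iff_iSupIndep_and_iSup_eq_top]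
  constructor
  · apply (Module.End.eigenspaces_iSupIndep (ρ e)).comp
    intro i j hij
    fin_cases i <;> fin_cases j <;>
      simp only [Fin.isValue, Matrix.cons_val_zero, Matrix.cons_val_one,
        Matrix.head_cons, Matrix.cons_val_two, Matrix.tail_cons] at hij <;>
      first
        | rfl
        | exact absurd hij zero_ne_one
        | exact absurd hij one_ne_zero
        | exact absurd hij (Ne.symm hl0)
        | exact absurd hij hl0
        | exact absurd hij (Ne.symm hl1)
        | exact absurd hij hl1
  · rw [eq_top_iff]
    intro m _
    have hc : ρ e (ρ e m) - ρ e m ∈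
        Module.End.eigenspace (ρ e) (![(0 : F), 1, l] 2) := by
      simp only [Module.End.mem_eigenspace_iff, Matrix.cons_val_two, Matrix.tail_cons,
        Matrix.head_cons]
      rw [map_sub, h3 m]
      match_scalars <;> (rw [hl]; field_simp; try ring)
    have hb : l • ρ e (ρ e m) - (l * l) • ρ e m ∈
        Module.End.eigenspace (ρ e) (![(0 : F), 1, l] 1) := by
      simp only [Module.End.mem_eigenspace_iff, Matrix.cons_val_one, Matrix.head_cons,
        Matrix.cons_val_zero]
      rw [map_sub, map_smul, map_smul, h3 m]
      match_scalars <;> (rw [hl]; field_simp; try ring)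
    have ha : (l * (l - 1)) • m + (l • ρ e (ρ e m) - (l * l) • ρ e m)
          - (ρ e (ρ e m) - ρ e m) ∈
        Module.End.eigenspace (ρ e) (![(0 : F), 1, l] 0) := by
      simp only [Module.End.mem_eigenspace_iff, Matrix.cons_val_zero]
      rw [map_sub, map_add, map_smul, map_sub, map_smul, map_smul, map_sub, h3 m]
      match_scalars <;> (rw [hl]; field_simp; try ring)
    have hp : l * (l - 1) ≠ 0 := mul_ne_zero hl0 (sub_ne_zero.mpr hl1)
    have hmem : (l * (l - 1)) • m ∈
        ⨆ i : Fin 3, Module.End.eigenspace (ρ e) (![(0 : F), 1, l] i) := by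
      have h4 : (l * (l - 1)) • m
          = ((l * (l - 1)) • m + (l • ρ e (ρ e m) - (l * l) • ρ e m)
              - (ρ e (ρ e m) - ρ e m))
            - (l • ρ e (ρ e m) - (l * l) • ρ e m) + (ρ e (ρ e m) - ρ e m) := by
        abel
      rw [h4]
      exact Submodule.add_mem _
        (Submodule.sub_mem _ (Submodule.mem_iSup_of_mem 0 ha)
          (Submodule.mem_iSup_of_mem 1 hb))
        (Submodule.mem_iSup_of_mem 2 hc)
    rwa [Submodule.smul_mem_iff _ hp] at hmem
end

section
/- Let A be a generalized almost-Jordan algebra for (β, γ) with γ ≠ 0, β + γ ≠ 0, β + 2γ ≠ 0, and additionally β ≠ 0 and β + 3γ ≠ 0. Let e ≠ 0 be an idempotent of A, let ρ : A → End_F(M) be a representation of A, and set λ = −γ/(β+γ). Then A₀·M_λ = {0}, A_λ·M₀ = {0}, and A_λ·M_λ = {0}. -/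
/-- Auxiliary: if `E` satisfies the cubic `δ•E³ = (δ+δλ)•E² - (δλ)•E` and `u` satisfies a
quadratic relation `δ•E²u = c₀•u + c₁•Eu` whose polynomial is coprime to the cubic, then
`u = 0`. -/
lemma key_aux {F : Type*} [Field F] {M : Type*} [AddCommGroup M] [Module F M]
    (E : Module.End F M) (δ lam c₀ c₁ : F) (u : M)
    (hδ : δ ≠ 0) (hl0 : lam ≠ 0) (hl1 : lam ≠ 1)
    (h0 : c₀ ≠ 0) (h1 : δ - c₁ - c₀ ≠ 0) (h2 : δ * lam ^ 2 - c₁ * lam - c₀ ≠ 0)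
    (hp : ∀ v : M, δ • E (E (E v)) - (δ + δ * lam) • E (E v) + (δ * lam) • E v = 0)
    (hq : δ • E (E u) = c₀ • u + c₁ • E u) : u = 0 := by
  have hq1 : δ • E (E (E u)) = c₀ • E u + c₁ • E (E u) := by
    have h := congrArg E hq
    simpa only [map_add, map_smul] using h
  have hq2 : δ • E (E (E (E u))) = c₀ • E (E u) + c₁ • E (E (E u)) := by
    have h := congrArg E hq1
    simpa only [map_add, map_smul] using h
  have hpu := hp u
  have hp1 := hp (E u)
  have hu1 : (δ - c₁ - c₀) • (δ • E (E u) - (δ * lam) • E u) = 0 := by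
    linear_combination (norm := module) δ • hq2 - (δ * lam) • hq1 - δ • hp1 - (δ - c₁) • hpu
  have hu2 : (δ * lam ^ 2 - c₁ * lam - c₀) • (δ • E (E u) - δ • E u) = 0 := by
    linear_combination (norm := module) δ • hq2 - δ • hq1 - δ • hp1 - (δ * lam - c₁) • hpu
  have hu0 : c₀ • (δ • E (E u) - (δ + δ * lam) • E u + (δ * lam) • u) = 0 := by
    linear_combination (norm := module) (-δ) • hq2 + (δ + δ * lam) • hq1 - (δ * lam) • hq
      + δ • hp1 - c₁ • hpu
  have v1 : δ • E (E u) - (δ * lam) • E u = 0 := (smul_eq_zero.mp hu1).resolve_left h1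
  have v2 : δ • E (E u) - δ • E u = 0 := (smul_eq_zero.mp hu2).resolve_left h2
  have v0 : δ • E (E u) - (δ + δ * lam) • E u + (δ * lam) • u = 0 :=
    (smul_eq_zero.mp hu0).resolve_left h0
  have hEu : E u = 0 := by
    have h : (δ * lam - δ) • E u = 0 := by linear_combination (norm := module) v2 - v1
    have hne : δ * lam - δ ≠ 0 := by
      intro hcon
      apply hl1
      have : δ * (lam - 1) = 0 := by linear_combination hcon
      rcases mul_eq_zero.mp this with h | h
      · exact absurd h hδ
      · exact sub_eq_zero.mp h
    exact (smul_eq_zero.mp h).resolve_left hne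
  have hE2u : E (E u) = 0 := by rw [hEu, map_zero]
  have hfin : (δ * lam) • u = 0 := by
    rw [hE2u, hEu] at v0
    simpa using v0
  exact (smul_eq_zero.mp hfin).resolve_left (mul_ne_zero hδ hl0)

theorem stmt3 {F : Type*} [Field F] [Infinite F]
    (hchar2 : (2 : F) ≠ 0) (hchar3 : (3 : F) ≠ 0)
    {A M : Type*} [NonUnitalNonAssocRing A] [Module F A]
    [SMulCommClass F A A] [IsScalarTower F A A]
    [AddCommGroup M] [Module F M]
    {β γ : F} (hβγ : (β, γ) ≠ (0, 0))
    (hcomm : ∀ x y : A, x * y = y * x)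
    (hA : IsGAJ F β γ (fun x y : A => x * y))
    (ρ : A →ₗ[F] Module.End F M)
    (hγ : γ ≠ 0) (hβγ1 : β + γ ≠ 0) (hβ2γ : β + 2 * γ ≠ 0)
    (hβ : β ≠ 0) (hβ3γ : β + 3 * γ ≠ 0)
    (e : A) (he : e * e = e) (hne : e ≠ 0)
    (hρ : IsRep F β γ ρ)
    (lam : F) (hlam : lam = -γ / (β + γ)) :
    actSpan F ρ e 0 lam = ⊥ ∧
    actSpan F ρ e lam 0 = ⊥ ∧
    actSpan F ρ e lam lam = ⊥ := by
  have hδ : β + γ ≠ 0 := hβγ1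
  have hlg : (β + γ) * lam = -γ := by
    rw [hlam]
    field_simp
  have hl0 : lam ≠ 0 := by
    rw [hlam]
    exact div_ne_zero (neg_ne_zero.mpr hγ) hβγ1
  have hl1 : lam ≠ 1 := by
    intro h
    apply hβ2γ
    rw [h, mul_one] at hlg
    linear_combination hlg
  have h6 : (6 : F) ≠ 0 := by
    have : (6 : F) = 2 * 3 := by norm_num
    rw [this]
    exact mul_ne_zero hchar2 hchar3
  -- the cubic identity for E = ρ e
  have hcub : ∀ v : M, β • ρ e (ρ e v) + γ • ρ e v - (β + γ) • ρ e (ρ e (ρ e v)) = 0 := by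
    intro v
    have H := hρ (e, (0 : M)) ((0 : A), v)
    have H2 := congrArg Prod.snd H
    simp only [sneMul, he, map_zero, LinearMap.zero_apply, zero_add, add_zero, zero_mul,
      mul_zero, Prod.snd_add, Prod.snd_sub, Prod.smul_snd, Prod.snd_zero] at H2
    linear_combination (norm := module) H2
  have hp : ∀ v : M, (β + γ) • ρ e (ρ e (ρ e v)) - (β + γ + (β + γ) * lam) • ρ e (ρ e v)
      + ((β + γ) * lam) • ρ e v = 0 := by
    intro v
    rw [hlg]
    linear_combination (norm := module) - hcub v
  -- scalar nonvanishing facts for cases with c₀ = β·λ - (β+γ)·λ², c₁ = -(β+γ)·λ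
  have hc0A : β * lam - (β + γ) * lam ^ 2 ≠ 0 := by
    have hval : β * lam - (β + γ) * lam ^ 2 = -γ := by
      rw [hlam]
      field_simp
      ring
    rw [hval]
    exact neg_ne_zero.mpr hγ
  have hc1A : (β + γ) - (-((β + γ) * lam)) - (β * lam - (β + γ) * lam ^ 2) ≠ 0 := by
    have hval : (β + γ) - (-((β + γ) * lam)) - (β * lam - (β + γ) * lam ^ 2) = β + γ := by
      rw [hlam]
      field_simp
      ring
    rw [hval]
    exact hβγ1
  have hc2A : (β + γ) * lam ^ 2 - (-((β + γ) * lam)) * lam - (β * lam - (β + γ) * lam ^ 2) ≠ 0 := by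
    have hval : ((β + γ) * lam ^ 2 - (-((β + γ) * lam)) * lam - (β * lam - (β + γ) * lam ^ 2))
        * (β + γ) = γ * (β + 3 * γ) := by
      rw [hlam]
      field_simp
      ring
    intro hz
    apply mul_ne_zero hγ hβ3γ
    rw [← hval, hz, zero_mul]
  refine ⟨?_, ?_, ?_⟩
  · -- A₀ · M_λ = 0
    rw [actSpan, Submodule.span_eq_bot]
    rintro x ⟨a, ha, m, hm, rfl⟩
    rw [zero_smul] at ha
    have hae : a * e = 0 := by rw [hcomm a e]; exact ha
    have H1 := hρ (e + a, (0 : M)) ((0 : A), m)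
    have H2 := hρ (e - a, (0 : M)) ((0 : A), m)
    have H3 := hρ (e + (2 : F) • a, (0 : M)) ((0 : A), m)
    have K1 := congrArg Prod.snd H1
    have K2 := congrArg Prod.snd H2
    have K3 := congrArg Prod.snd H3
    simp only [sneMul, he, ha, hae, hm, map_zero, map_add, map_sub, map_smul, smul_zero,
      LinearMap.zero_apply, LinearMap.add_apply, LinearMap.sub_apply, LinearMap.smul_apply,
      zero_add, add_zero, zero_mul, mul_zero, zero_sub, sub_zero,
      mul_add, add_mul, mul_sub, sub_mul, smul_mul_assoc, mul_smul_comm, smul_smul, smul_add,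
      smul_sub, smul_neg, neg_smul, map_neg, neg_zero, add_neg_cancel, neg_add_cancel,
      neg_mul, mul_neg, LinearMap.neg_apply, neg_neg,
      Prod.snd_add, Prod.snd_sub, Prod.smul_snd, Prod.snd_zero] at K1 K2 K3
    have hq : (β + γ) • ρ e (ρ e (ρ a m)) =
        (β * lam - (β + γ) * lam ^ 2) • ρ a m + (-((β + γ) * lam)) • ρ e (ρ a m) := by
      have key : (6 : F) • ((β + γ) • ρ e (ρ e (ρ a m)) -
          ((β * lam - (β + γ) * lam ^ 2) • ρ a m + (-((β + γ) * lam)) • ρ e (ρ a m))) = 0 := by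
        have Hz : ((β + γ) * lam + γ) • m = (0 : M) := by
          have hz : (β + γ) * lam + γ = 0 := by linear_combination hlg
          rw [hz, zero_smul]
        linear_combination (norm := module) (-6 : F) • K1 + (2 : F) • K2 + K3
          + ((3 : F) * (lam - lam ^ 2)) • Hz
      rcases smul_eq_zero.mp key with h | h
      · exact absurd h h6
      · linear_combination (norm := module) h
    exact key_aux (ρ e) (β + γ) lam _ _ (ρ a m) hδ hl0 hl1 hc0A hc1A hc2A hp hq
  · -- A_λ · M₀ = 0
    rw [actSpan, Submodule.span_eq_bot]
    rintro x ⟨a, ha, m, hm, rfl⟩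
    rw [zero_smul] at hm
    have hae : a * e = lam • a := by rw [hcomm a e]; exact ha
    have H := hρ (e, m) (a, (0 : M))
    have H2 := congrArg Prod.snd H
    simp only [sneMul, he, ha, hae, hm, map_zero, map_add, map_smul, smul_zero,
      LinearMap.zero_apply, LinearMap.add_apply, LinearMap.smul_apply, zero_add, add_zero,
      smul_mul_assoc, mul_smul_comm, smul_smul, smul_add,
      Prod.snd_add, Prod.snd_sub, Prod.smul_snd, Prod.snd_zero] at H2
    have hq : (β + γ) • ρ e (ρ e (ρ a m)) =
        (β * lam - (β + γ) * lam ^ 2) • ρ a m + (-((β + γ) * lam)) • ρ e (ρ a m) := by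
      linear_combination (norm := module) -H2
    exact key_aux (ρ e) (β + γ) lam _ _ (ρ a m) hδ hl0 hl1 hc0A hc1A hc2A hp hq
  · -- A_λ · M_λ = 0
    rw [actSpan, Submodule.span_eq_bot]
    rintro x ⟨a, ha, m, hm, rfl⟩
    have hae : a * e = lam • a := by rw [hcomm a e]; exact ha
    have H := hρ (e, m) (a, (0 : M))
    have H2 := congrArg Prod.snd H
    simp only [sneMul, he, ha, hae, hm, map_zero, map_add, map_smul, smul_zero,
      LinearMap.zero_apply, LinearMap.add_apply, LinearMap.smul_apply, zero_add, add_zero,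
      smul_mul_assoc, mul_smul_comm, smul_smul, smul_add,
      Prod.snd_add, Prod.snd_sub, Prod.smul_snd, Prod.snd_zero] at H2
    have hq : (β + γ) • ρ e (ρ e (ρ a m)) =
        (lam * (β + γ) + lam ^ 2 * (γ - β)) • ρ a m + (lam * (β - γ)) • ρ e (ρ a m) := by
      linear_combination (norm := module) -H2
    have hc0B : lam * (β + γ) + lam ^ 2 * (γ - β) ≠ 0 := by
      have hval : (lam * (β + γ) + lam ^ 2 * (γ - β)) * (β + γ) ^ 2
          = -(β * γ * (β + 3 * γ)) := by
        rw [hlam]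
        field_simp
        ring
      intro hz
      have : -(β * γ * (β + 3 * γ)) ≠ 0 :=
        neg_ne_zero.mpr (mul_ne_zero (mul_ne_zero hβ hγ) hβ3γ)
      exact this (by rw [← hval, hz, zero_mul])
    have hc1B : (β + γ) - lam * (β - γ) - (lam * (β + γ) + lam ^ 2 * (γ - β)) ≠ 0 := by
      have hval : ((β + γ) - lam * (β - γ) - (lam * (β + γ) + lam ^ 2 * (γ - β))) * (β + γ) ^ 2
          = β * (β + 2 * γ) * (β + 3 * γ) := by
        rw [hlam]
        field_simp
        ring
      intro hz
      have : β * (β + 2 * γ) * (β + 3 * γ) ≠ 0 :=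
        mul_ne_zero (mul_ne_zero hβ hβ2γ) hβ3γ
      exact this (by rw [← hval, hz, zero_mul])
    have hc2B : (β + γ) * lam ^ 2 - (lam * (β - γ)) * lam
        - (lam * (β + γ) + lam ^ 2 * (γ - β)) ≠ 0 := by
      have hval : ((β + γ) * lam ^ 2 - (lam * (β - γ)) * lam
          - (lam * (β + γ) + lam ^ 2 * (γ - β))) * (β + γ) = γ * (β + 2 * γ) := by
        rw [hlam]
        field_simp
        ring
      intro hz
      have : γ * (β + 2 * γ) ≠ 0 := mul_ne_zero hγ hβ2γ
      exact this (by rw [← hval, hz, zero_mul])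
    exact key_aux (ρ e) (β + γ) lam _ _ (ρ a m) hδ hl0 hl1 hc0B hc1B hc2B hp hq
end

section
/- Let A be a generalized almost-Jordan algebra for (β, γ) with γ = 0 (hence β ≠ 0), i.e. A satisfies (yx²)x − ((yx)x)x = 0 for all x, y ∈ A. Let e ≠ 0 be an idempotent of A and let ρ : A → End_F(M) be a representation of A. Set A₀ = {x ∈ A : e(ex) = 0}, A₁ = {x ∈ A : ex = x}, M₀ = {m ∈ M : ρ_e(ρ_e(m)) = 0}, M₁ = {m ∈ M : ρ_e(m) = m}. Then A₁·M₀ ⊆ M₀, A₀·M₁ ⊆ M₀, and A₀·M₀ ⊆ M₀. -/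
theorem stmt4 {F : Type*} [Field F] [Infinite F]
    (hchar2 : (2 : F) ≠ 0) (hchar3 : (3 : F) ≠ 0)
    {A M : Type*} [NonUnitalNonAssocRing A] [Module F A]
    [SMulCommClass F A A] [IsScalarTower F A A]
    [AddCommGroup M] [Module F M]
    {β γ : F} (hβγ : (β, γ) ≠ (0, 0))
    (hcomm : ∀ x y : A, x * y = y * x)
    (hA : IsGAJ F β γ (fun x y : A => x * y))
    (ρ : A →ₗ[F] Module.End F M)
    (hγ0 : γ = 0) (hβ : β ≠ 0)
    (e : A) (he : e * e = e) (hne : e ≠ 0)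
    (hρ : IsRep F β γ ρ) :
    Submodule.span F {x : M | ∃ a : A, e * a = a ∧ ∃ m : M, ρ e (ρ e m) = 0 ∧ ρ a m = x}
        ≤ LinearMap.ker (ρ e ∘ₗ ρ e) ∧
    Submodule.span F {x : M | ∃ a : A, e * (e * a) = 0 ∧ ∃ m : M, ρ e m = m ∧ ρ a m = x}
        ≤ LinearMap.ker (ρ e ∘ₗ ρ e) ∧
    Submodule.span F {x : M | ∃ a : A, e * (e * a) = 0 ∧ ∃ m : M, ρ e (ρ e m) = 0 ∧ ρ a m = x}
        ≤ LinearMap.ker (ρ e ∘ₗ ρ e) := by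
  have cancel2 : ∀ x y : M, x + x = y + y → x = y := by
    intro x y h
    have h2 : (2 : F) • x = (2 : F) • y := by rw [two_smul, two_smul]; exact h
    exact smul_right_injective M hchar2 h2
  have hS : ∀ x y : A × M, sneMul F ρ (sneMul F ρ y (sneMul F ρ x x)) x
      = sneMul F ρ (sneMul F ρ (sneMul F ρ y x) x) x := by
    intro x y
    have h := hρ x y
    rw [hγ0, zero_smul, add_zero, smul_eq_zero] at h
    rcases h with h | h
    · exact absurd h hβ
    · exact sub_eq_zero.mp h
  have hI : ∀ (a : A) (v : M), ρ a (ρ (a*a) v) = ρ a (ρ a (ρ a v)) := by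
    intro a v
    have h := congrArg Prod.snd (hS (a, 0) ((0:A), v))
    simpa [sneMul] using h
  have hII : ∀ (a b : A) (v : M),
      ρ (b*(a*a)) v + (ρ a (ρ b (ρ a v)) + ρ a (ρ b (ρ a v)))
        = ρ ((b*a)*a) v + (ρ a (ρ (b*a) v) + ρ a (ρ a (ρ b v))) := by
    intro a b v
    have h := congrArg Prod.snd (hS (a, v) (b, 0))
    simp [sneMul] at h
    exact h
  have hE3 : ∀ v : M, ρ e (ρ e (ρ e v)) = ρ e (ρ e v) := by
    intro v
    have h := hI e v
    rw [he] at h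
    exact h.symm
  have hstar : ∀ (b : A) (v : M),
      ρ (b*e) v + (ρ e (ρ b (ρ e v)) + ρ e (ρ b (ρ e v)))
        = ρ ((b*e)*e) v + (ρ e (ρ (b*e) v) + ρ e (ρ e (ρ b v))) := by
    intro b v
    have h := hII e b v
    rwa [he] at h
  have hL1 : ∀ (b : A) (v : M),
      ρ b (ρ e v) + (ρ e (ρ (e*b) v) + ρ e (ρ (e*b) v))
        = ρ b (ρ e (ρ e v)) + (ρ e (ρ b (ρ e v)) + ρ e (ρ e (ρ b v))) := by
    intro b v
    have h1 := hI (e + b) v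
    have h2 := hI (e - b) v
    have h3 := hI b v
    simp only [mul_add, add_mul, mul_sub, sub_mul, he, map_add, map_sub,
      LinearMap.add_apply, LinearMap.sub_apply] at h1 h2
    rw [hcomm b e] at h1 h2
    apply cancel2
    linear_combination (norm := module) h1 - h2 - (2:ℤ) • h3
  -- the A₀ helper
  have h3v : ∀ (a : A), e * (e * a) = 0 → ∀ v : M,
      ρ e (ρ (e*a) (ρ e v)) + ρ e (ρ (e*a) (ρ e v)) = ρ e (ρ e (ρ (e*a) v)) := by
    intro a ha v
    have hae : (e*a)*e = 0 := (hcomm _ _).trans ha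
    have h := hstar (e*a) v
    rw [hae] at h
    simpa using h
  refine ⟨?_, ?_, ?_⟩
  · -- A₁ · M₀
    rw [Submodule.span_le]
    rintro x ⟨a, ha, m, hm, rfl⟩
    simp only [SetLike.mem_coe, LinearMap.mem_ker, LinearMap.comp_apply]
    have hae : a * e = a := (hcomm a e).trans ha
    have key : ∀ v : M, ρ e (ρ a (ρ e v)) + ρ e (ρ a (ρ e v))
        = ρ e (ρ a v) + ρ e (ρ e (ρ a v)) := by
      intro v
      have h := hstar a v
      simp only [hae] at h
      exact add_left_cancel h
    have key2 : ∀ v : M, ρ e (ρ e (ρ a (ρ e v))) = ρ e (ρ e (ρ a v)) := by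
      intro v
      apply cancel2
      have h := congrArg (ρ e) (key v)
      rw [map_add, map_add, hE3 (ρ a v)] at h
      exact h
    calc ρ e (ρ e (ρ a m)) = ρ e (ρ e (ρ a (ρ e m))) := (key2 m).symm
      _ = ρ e (ρ e (ρ a (ρ e (ρ e m)))) := (key2 (ρ e m)).symm
      _ = 0 := by rw [hm]; simp
  · -- A₀ · M₁
    rw [Submodule.span_le]
    rintro x ⟨a, ha, m, hm, rfl⟩
    simp only [SetLike.mem_coe, LinearMap.mem_ker, LinearMap.comp_apply]
    have hα := hL1 a m
    rw [hm, hm] at hα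
    have hα' := add_left_cancel hα
    -- hα' : Z + Z = ρ e (ρ a m) + ρ e (ρ e (ρ a m))
    have hγ := h3v a ha m
    rw [hm] at hγ
    -- hγ : Z + Z = ρ e (ρ e (ρ (e*a) m))
    have h4 := congrArg (ρ e) hα'
    rw [map_add, map_add, hE3 (ρ a m)] at h4
    have hEZ := cancel2 _ _ h4
    -- hEZ : ρ e (ρ e (ρ (e*a) m)) = ρ e (ρ e (ρ a m))
    rw [hEZ] at hγ
    have h5 := hγ.symm.trans hα'
    -- h5 : X = ρ e (ρ a m) + X
    have h6 : ρ e (ρ a m) = 0 := right_eq_add.mp h5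
    rw [h6, map_zero]
  · -- A₀ · M₀
    rw [Submodule.span_le]
    rintro x ⟨a, ha, m, hm, rfl⟩
    simp only [SetLike.mem_coe, LinearMap.mem_ker, LinearMap.comp_apply]
    -- EW = 0
    have hEW : ρ e (ρ e (ρ (e*a) (ρ e m))) = 0 := by
      have h8 := h3v a ha (ρ e m)
      rw [hm] at h8
      simpa using h8.symm
    -- EZ = 0
    have hEZ : ρ e (ρ e (ρ (e*a) m)) = 0 := by
      have h7 := congrArg (ρ e) (h3v a ha m)
      rw [map_add, hE3 (ρ (e*a) m), hEW] at h7
      simpa using h7.symm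
    have hv := hL1 a m
    rw [hm, map_zero] at hv
    have h6 := congrArg (ρ e) (congrArg (ρ e) hv)
    simp only [map_add] at h6
    rw [hE3 (ρ a (ρ e m)), hE3 (ρ (e*a) m), hEZ, hE3 (ρ e (ρ a m)), hE3 (ρ a m)] at h6
    -- h6 : T + (0 + 0) = T + X  (roughly)
    simp only [map_zero, add_zero, zero_add] at h6
    exact left_eq_add.mp h6
end

section
/- Let A be a generalized almost-Jordan algebra for (β, γ) with β + γ = 0 (and γ ≠ 0). Let e ≠ 0 be an idempotent of A and let ρ : A → End_F(M) be a representation of A. Set A_i = {a ∈ A : ea = ia} and M_i = {m ∈ M : ρ_e(m) = i m} for i = 0, 1. Then A₀·M₁ = {0}, A₁·M₀ = {0}, and A₁·M₁ ⊆ M₁. -/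
theorem stmt5 {F : Type*} [Field F] [Infinite F]
    (hchar2 : (2 : F) ≠ 0) (hchar3 : (3 : F) ≠ 0)
    {A M : Type*} [NonUnitalNonAssocRing A] [Module F A]
    [SMulCommClass F A A] [IsScalarTower F A A]
    [AddCommGroup M] [Module F M]
    {β γ : F} (hβγ : (β, γ) ≠ (0, 0))
    (hcomm : ∀ x y : A, x * y = y * x)
    (hA : IsGAJ F β γ (fun x y : A => x * y))
    (ρ : A →ₗ[F] Module.End F M)
    (hβγ0 : β + γ = 0) (hγ : γ ≠ 0)
    (e : A) (he : e * e = e) (hne : e ≠ 0)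
    (hρ : IsRep F β γ ρ) :
    actSpan F ρ e 0 1 = ⊥ ∧
    actSpan F ρ e 1 0 = ⊥ ∧
    actSpan F ρ e 1 1 ≤ Module.End.eigenspace (ρ e) 1 := by
  -- Key identity: ρ((x²)x) = ρ(x) ∘ ρ(x²), from β = -γ and the GAJ identity on A ⊕ M.
  have key : ∀ (x : A) (m : M), ρ ((x*x)*x) m = ρ x (ρ (x*x) m) := by
    intro x m
    have h := hρ (x, (0:M)) ((0:A), m)
    have h2 := congrArg Prod.snd h
    simp only [sneMul, zero_mul, mul_zero, map_zero, Prod.smul_snd, Prod.snd_add,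
      Prod.snd_sub, Prod.snd_zero, LinearMap.zero_apply, add_zero, zero_add] at h2
    have hβ : β = -γ := eq_neg_of_add_eq_zero_left hβγ0
    rw [hβ] at h2
    have h3 : γ • (ρ ((x*x)*x) m - ρ x (ρ (x*x) m)) = 0 := by
      linear_combination (norm := module) h2
    rcases smul_eq_zero.mp h3 with h | h
    · exact absurd h hγ
    · linear_combination (norm := module) h
  -- Linearization of the key identity at x = e (degree 1 part, doubled):
  -- 4·ρ((ea)e) + 2·ρ(ea) = 4·ρe∘ρ(ea) + 2·ρa∘ρe.
  have lin : ∀ (a : A) (m : M),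
      ρ ((e*a)*e) m + ρ ((e*a)*e) m + ρ ((e*a)*e) m + ρ ((e*a)*e) m
          + ρ (e*a) m + ρ (e*a) m
        = ρ e (ρ (e*a) m) + ρ e (ρ (e*a) m) + ρ e (ρ (e*a) m) + ρ e (ρ (e*a) m)
          + ρ a (ρ e m) + ρ a (ρ e m) := by
    intro a m
    have hp := key (e + a) m
    have hm := key (e - a) m
    have ha := key a m
    simp only [mul_add, add_mul, mul_sub, sub_mul, map_add, map_sub,
      LinearMap.add_apply, LinearMap.sub_apply, he, hcomm a e] at hp hm
    linear_combination (norm := module) hp - hm - ha - ha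
  have hE : ∀ m : M, ρ e (ρ e m) = ρ e m := by
    intro m
    have h := key e m
    simp only [he] at h
    exact h.symm
  have h6 : (6 : F) ≠ 0 := by
    have : (6 : F) = 2 * 3 := by norm_num
    rw [this]
    exact mul_ne_zero hchar2 hchar3
  refine ⟨?_, ?_, ?_⟩
  · -- A₀ · M₁ = 0
    rw [actSpan, Submodule.span_eq_bot]
    rintro x ⟨a, ha, m, hm, rfl⟩
    rw [zero_smul] at ha
    rw [one_smul] at hm
    have h := lin a m
    simp only [ha, zero_mul, map_zero, LinearMap.zero_apply, zero_add, add_zero, hm] at h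
    -- h : 0 = ρ a m + ρ a m  (up to orientation)
    have h2 : (2 : F) • ρ a m = 0 := by
      linear_combination (norm := module) -h
    rcases smul_eq_zero.mp h2 with hc | hc
    · exact absurd hc hchar2
    · exact hc
  · -- A₁ · M₀ = 0
    rw [actSpan, Submodule.span_eq_bot]
    rintro x ⟨a, ha, m, hm, rfl⟩
    rw [one_smul] at ha
    rw [zero_smul] at hm
    have h := lin a m
    simp only [ha, hcomm a e, hm, map_zero, add_zero] at h
    -- h : 6·ρ a m = 4·ρ e (ρ a m)
    have h2 := congrArg (ρ e) h
    simp only [map_add, map_zero, hE] at h2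
    -- h2 : 6·E v = 4·E v hence 2·E v = 0
    have hEv2 : (2 : F) • ρ e (ρ a m) = 0 := by
      linear_combination (norm := module) h2
    have hEv : ρ e (ρ a m) = 0 := by
      rcases smul_eq_zero.mp hEv2 with hc | hc
      · exact absurd hc hchar2
      · exact hc
    rw [hEv] at h
    have h3 : (6 : F) • ρ a m = 0 := by
      linear_combination (norm := module) h
    rcases smul_eq_zero.mp h3 with hc | hc
    · exact absurd hc h6
    · exact hc
  · -- A₁ · M₁ ⊆ M₁
    rw [actSpan, Submodule.span_le]
    rintro x ⟨a, ha, m, hm, rfl⟩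
    rw [one_smul] at ha
    rw [one_smul] at hm
    rw [SetLike.mem_coe, Module.End.mem_eigenspace_iff, one_smul]
    have h := lin a m
    simp only [ha, hcomm a e, hm] at h
    -- h : 6·v = 4·E v + 2·v hence 4·E v = 4·v
    have h4ne : (4 : F) ≠ 0 := by
      have : (4 : F) = 2 * 2 := by norm_num
      rw [this]
      exact mul_ne_zero hchar2 hchar2
    have h2 : (4 : F) • ρ e (ρ a m) = (4 : F) • ρ a m := by
      linear_combination (norm := module) -h
    exact smul_right_injective M h4ne h2
end

section
/- Let A be a generalized almost-Jordan algebra for (β, γ) with β + 2γ = 0 (and γ ≠ 0). Let e ≠ 0 be an idempotent of A and let ρ : A → End_F(M) be a representation of A. Set A₀ = {x ∈ A : ex = 0}, A₁ = {x ∈ A : e(ex) − 2(ex) + x = 0}, M₀ = {m ∈ M : ρ_e(m) = 0}, M₁ = {m ∈ M : (ρ_e − id)²(m) = 0}. Then A₀·M₁ = {0}, A₁·M₀ = {0}, and A₀·M₀ ⊆ M₀. -/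
theorem stmt6 {F : Type*} [Field F] [Infinite F]
    (hchar2 : (2 : F) ≠ 0) (hchar3 : (3 : F) ≠ 0)
    {A M : Type*} [NonUnitalNonAssocRing A] [Module F A]
    [SMulCommClass F A A] [IsScalarTower F A A]
    [AddCommGroup M] [Module F M]
    {β γ : F} (hβγ : (β, γ) ≠ (0, 0))
    (hcomm : ∀ x y : A, x * y = y * x)
    (hA : IsGAJ F β γ (fun x y : A => x * y))
    (ρ : A →ₗ[F] Module.End F M)
    (hβ2γ0 : β + 2 * γ = 0) (hγ : γ ≠ 0)
    (e : A) (he : e * e = e) (hne : e ≠ 0)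
    (hρ : IsRep F β γ ρ) :
    Submodule.span F {x : M | ∃ a : A, e * a = 0 ∧
        ∃ m : M, ((ρ e - 1) * (ρ e - 1)) m = 0 ∧ ρ a m = x} = ⊥ ∧
    Submodule.span F {x : M | ∃ a : A, e * (e * a) - (2 : F) • (e * a) + a = 0 ∧
        ∃ m : M, ρ e m = 0 ∧ ρ a m = x} = ⊥ ∧
    Submodule.span F {x : M | ∃ a : A, e * a = 0 ∧ ∃ m : M, ρ e m = 0 ∧ ρ a m = x}
        ≤ LinearMap.ker (ρ e) := by
  classical
  have hβ : β = -(2 * γ) := by linear_combination hβ2γ0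
  have hcγ : ∀ x : M, γ • x = 0 → x = 0 := by
    intro x hx
    rcases smul_eq_zero.mp hx with h | h
    · exact absurd h hγ
    · exact h
  have hc2 : ∀ x : M, (2:F) • x = 0 → x = 0 := by
    intro x hx
    rcases smul_eq_zero.mp hx with h | h
    · exact absurd h hchar2
    · exact h
  -- base identity in the split null extension
  have base : ∀ p q : A × M,
      sneMul F ρ q (sneMul F ρ (sneMul F ρ p p) p)
        - (2:F) • sneMul F ρ (sneMul F ρ q (sneMul F ρ p p)) p
        + sneMul F ρ (sneMul F ρ (sneMul F ρ q p) p) p = 0 := by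
    intro p q
    have h := hρ p q
    rw [hβ] at h
    have h2 : γ • (sneMul F ρ q (sneMul F ρ (sneMul F ρ p p) p)
        - (2:F) • sneMul F ρ (sneMul F ρ q (sneMul F ρ p p)) p
        + sneMul F ρ (sneMul F ρ (sneMul F ρ q p) p) p) = 0 := by
      linear_combination (norm := module) h
    rcases smul_eq_zero.mp h2 with h3 | h3
    · exact absurd h3 hγ
    · exact h3
  -- E (E-1)^2 = 0
  have hE3 : ∀ v : M, ρ e (ρ e (ρ e v)) = (2:F) • ρ e (ρ e v) - ρ e v := by
    intro v
    have h := base (e, (0:M)) ((0:A), v)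
    have h2 := congrArg Prod.snd h
    simp only [sneMul, he, map_zero, zero_mul, mul_zero, add_zero, zero_add,
      LinearMap.zero_apply, Prod.snd_sub, Prod.snd_add, Prod.smul_snd, Prod.snd_zero] at h2
    linear_combination (norm := module) h2
  -- cube identity for pure algebra elements
  have hG : ∀ (x : A) (v : M),
      ρ ((x*x)*x) v - (2:F) • ρ x (ρ (x*x) v) + ρ x (ρ x (ρ x v)) = 0 := by
    intro x v
    have h := base (x, (0:M)) ((0:A), v)
    have h2 := congrArg Prod.snd h
    simp only [sneMul, map_zero, zero_mul, mul_zero, add_zero, zero_add,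
      LinearMap.zero_apply, Prod.snd_sub, Prod.snd_add, Prod.smul_snd, Prod.snd_zero] at h2
    linear_combination (norm := module) h2
  -- identity (III): direct, x = (e, v), y = (a, 0)
  have hIII : ∀ (a : A) (v : M),
      ρ a (ρ e v) + (2:F) • ρ a (ρ e (ρ e v)) - (2:F) • ρ (a*e) v
        - (4:F) • ρ e (ρ a (ρ e v)) + ρ ((a*e)*e) v + ρ e (ρ (a*e) v)
        + ρ e (ρ e (ρ a v)) = 0 := by
    intro a v
    have h := base (e, v) (a, (0:A × M).2)
    have h2 := congrArg Prod.snd h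
    simp only [sneMul, he, map_zero, map_add, zero_mul, mul_zero, add_zero, zero_add,
      LinearMap.zero_apply, LinearMap.add_apply, Prod.snd_sub, Prod.snd_add,
      Prod.smul_snd, Prod.snd_zero] at h2
    linear_combination (norm := module) h2
  -- identity (I): polarization of hG at e in direction a
  have hI : ∀ (a : A) (v : M),
      (2:F) • ρ ((e*a)*e) v + ρ (e*a) v - (2:F) • ρ a (ρ e v)
        - (4:F) • ρ e (ρ (e*a) v) + ρ a (ρ e (ρ e v)) + ρ e (ρ a (ρ e v))
        + ρ e (ρ e (ρ a v)) = 0 := by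
    intro a v
    have h1 := hG (e + a) v
    have h2 := hG (e - a) v
    have h3 := hG a v
    simp only [add_mul, mul_add, sub_mul, mul_sub, he, hcomm a e, map_add, map_sub,
      LinearMap.add_apply, LinearMap.sub_apply] at h1 h2
    apply hc2
    linear_combination (norm := module) h1 - h2 - (2:F) • h3
  refine ⟨?_, ?_, ?_⟩
  · -- A₀ · M₁ = 0
    rw [Submodule.span_eq_bot]
    rintro x ⟨a, ha, m, hm, rfl⟩
    simp only [Module.End.mul_apply, LinearMap.sub_apply, Module.End.one_apply, map_sub] at hm
    have hm2 : ρ e (ρ e m) = (2:F) • ρ e m - m := by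
      linear_combination (norm := module) hm
    have hm3 : ρ e (ρ e (ρ e m)) = (3:F) • ρ e m - (2:F) • m := by
      rw [hm2, map_sub, map_smul, hm2]
      module
    have hra2 : ρ a (ρ e (ρ e m)) = (2:F) • ρ a (ρ e m) - ρ a m := by
      rw [hm2]
      simp only [map_sub, map_smul]
    have hra3 : ρ a (ρ e (ρ e (ρ e m))) = (3:F) • ρ a (ρ e m) - (2:F) • ρ a m := by
      rw [hm3]
      simp only [map_sub, map_smul]
    have hv3 := hE3 (ρ a m)
    have hw3 := hE3 (ρ a (ρ e m))
    have K : ∀ t : M, ρ a (ρ e (ρ e t)) - (2:F) • ρ a (ρ e t) + ρ e (ρ a (ρ e t))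
        + ρ e (ρ e (ρ a t)) = 0 := by
      intro t
      have h := hI a t
      rw [ha] at h
      simp only [zero_mul, map_zero, LinearMap.zero_apply, smul_zero, zero_add, add_zero,
        zero_sub, sub_zero] at h
      linear_combination (norm := module) h
    have e0 : ρ e (ρ a (ρ e m)) + ρ e (ρ e (ρ a m)) - ρ a m = 0 := by
      have h := K m
      rw [hra2] at h
      linear_combination (norm := module) h
    have e1 : ρ e (ρ e (ρ a (ρ e m))) + (2:F) • ρ e (ρ e (ρ a m))
        - (2:F) • ρ e (ρ a m) = 0 := by
      have h := congrArg (fun z => ρ e z) e0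
      simp only [map_add, map_sub, map_zero] at h
      rw [hv3] at h
      linear_combination (norm := module) h
    have e2 : (2:F) • ρ e (ρ e (ρ a (ρ e m))) - ρ e (ρ a (ρ e m))
        + (2:F) • ρ e (ρ e (ρ a m)) - (2:F) • ρ e (ρ a m) = 0 := by
      have h := congrArg (fun z => ρ e z) e1
      simp only [map_add, map_sub, map_smul, map_zero] at h
      rw [hv3, hw3] at h
      linear_combination (norm := module) h
    have e3 : (2:F) • ρ e (ρ a (ρ e m)) + ρ e (ρ e (ρ a (ρ e m)))
        - ρ a (ρ e m) - ρ e (ρ a m) = 0 := by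
      have h := K (ρ e m)
      rw [hra3] at h
      rw [hra2] at h
      simp only [map_sub, map_smul] at h
      linear_combination (norm := module) h
    have e4 : (4:F) • ρ e (ρ e (ρ a (ρ e m))) - (2:F) • ρ e (ρ a (ρ e m))
        - ρ e (ρ e (ρ a m)) = 0 := by
      have h := congrArg (fun z => ρ e z) e3
      simp only [map_add, map_sub, map_smul, map_zero] at h
      rw [hw3] at h
      linear_combination (norm := module) h
    have e5 : ρ e (ρ a m) - (4:F) • ρ e (ρ a (ρ e m)) - (2:F) • ρ e (ρ e (ρ a m))
        + (6:F) • ρ e (ρ e (ρ a (ρ e m))) = 0 := by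
      have h := congrArg (fun z => ρ e z) e4
      simp only [map_add, map_sub, map_smul, map_zero] at h
      rw [hw3, hv3] at h
      linear_combination (norm := module) h
    linear_combination (norm := module) (-1:F) • e0 + (14:F) • e1 - (11:F) • e2
      - (7:F) • e4 + (6:F) • e5
  · -- A₁ · M₀ = 0
    rw [Submodule.span_eq_bot]
    rintro x ⟨a, ha, m, hm, rfl⟩
    have hb1 : e * (e * a) = (2:F) • (e * a) - a := by
      linear_combination (norm := module) ha
    have hA2 : (e * a) * e = (2:F) • (e * a) - a := by
      rw [hcomm (e*a) e]; exact hb1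
    have hA3 : (e * (e * a)) * e = (3:F) • (e * a) - (2:F) • a := by
      rw [hcomm (e*(e*a)) e, hb1, mul_sub, mul_smul_comm, hb1]
      module
    have hA4 : ((e * a) * e) * e = (3:F) • (e * a) - (2:F) • a := by
      rw [hcomm (e*a) e]; exact hA3
    have R1 : ρ (e * (e * a)) m = (2:F) • ρ (e * a) m - ρ a m := by
      rw [hb1]; simp only [map_sub, map_smul, LinearMap.sub_apply, LinearMap.smul_apply]
    have R2 : ρ ((e * a) * e) m = (2:F) • ρ (e * a) m - ρ a m := by
      rw [hA2]; simp only [map_sub, map_smul, LinearMap.sub_apply, LinearMap.smul_apply]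
    have R3 : ρ ((e * (e * a)) * e) m = (3:F) • ρ (e * a) m - (2:F) • ρ a m := by
      rw [hA3]; simp only [map_sub, map_smul, LinearMap.sub_apply, LinearMap.smul_apply]
    have R4 : ρ (((e * a) * e) * e) m = (3:F) • ρ (e * a) m - (2:F) • ρ a m := by
      rw [hA4]; simp only [map_sub, map_smul, LinearMap.sub_apply, LinearMap.smul_apply]
    have hp3 := hE3 (ρ a m)
    have hq3 := hE3 (ρ (e * a) m)
    have F1 : (5:F) • ρ (e*a) m - (2:F) • ρ a m - (4:F) • ρ e (ρ (e*a) m)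
        + ρ e (ρ e (ρ a m)) = 0 := by
      have h := hI a m
      rw [hm] at h
      simp only [map_zero, smul_zero, zero_add, add_zero, sub_zero, zero_sub] at h
      rw [R2] at h
      linear_combination (norm := module) h
    have F1' : (5:F) • ρ e (ρ (e*a) m) - (3:F) • ρ e (ρ a m)
        - (4:F) • ρ e (ρ e (ρ (e*a) m)) + (2:F) • ρ e (ρ e (ρ a m)) = 0 := by
      have h := congrArg (fun z => ρ e z) F1
      simp only [map_add, map_sub, map_smul, map_zero] at h
      rw [hp3] at h
      linear_combination (norm := module) h
    have F1'' : ρ e (ρ e (ρ a m)) - (2:F) • ρ e (ρ a m) + (4:F) • ρ e (ρ (e*a) m)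
        - (3:F) • ρ e (ρ e (ρ (e*a) m)) = 0 := by
      have h := congrArg (fun z => ρ e z) F1'
      simp only [map_add, map_sub, map_smul, map_zero] at h
      rw [hp3, hq3] at h
      linear_combination (norm := module) h
    have F2 : (8:F) • ρ (e*a) m - (5:F) • ρ a m - (8:F) • ρ e (ρ (e*a) m)
        + (4:F) • ρ e (ρ a m) + ρ e (ρ e (ρ (e*a) m)) = 0 := by
      have h := hI (e*a) m
      rw [hm] at h
      simp only [map_zero, smul_zero, zero_add, add_zero, sub_zero, zero_sub] at h
      rw [R3, R1] at h
      simp only [map_sub, map_smul] at h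
      linear_combination (norm := module) h
    have F3 : ρ e (ρ (e*a) m) - ρ a m + ρ e (ρ e (ρ a m)) = 0 := by
      have h := hIII a m
      rw [hcomm a e] at h
      rw [hm] at h
      simp only [map_zero, smul_zero, zero_add, add_zero, sub_zero, zero_sub] at h
      rw [R2] at h
      linear_combination (norm := module) h
    have F3' : ρ e (ρ e (ρ (e*a) m)) - (2:F) • ρ e (ρ a m)
        + (2:F) • ρ e (ρ e (ρ a m)) = 0 := by
      have h := congrArg (fun z => ρ e z) F3
      simp only [map_add, map_sub, map_smul, map_zero] at h
      rw [hp3] at h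
      linear_combination (norm := module) h
    have h9 : (9:F) • ρ a m = 0 := by
      linear_combination (norm := module) (56:F) • F1 + (10:F) • F1' - (40:F) • F1''
        - (35:F) • F2 + (54:F) • F3 - (45:F) • F3'
    have h9ne : (9:F) ≠ 0 := by
      have : (9:F) = 3 * 3 := by norm_num
      rw [this]
      exact mul_ne_zero hchar3 hchar3
    rcases smul_eq_zero.mp h9 with h | h
    · exact absurd h h9ne
    · exact h
  · -- A₀ · M₀ ⊆ M₀
    rw [Submodule.span_le]
    rintro x ⟨a, ha, m, hm, rfl⟩
    simp only [SetLike.mem_coe, LinearMap.mem_ker]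
    have h := hI a m
    rw [ha, hm] at h
    simp only [zero_mul, map_zero, LinearMap.zero_apply, smul_zero, zero_add, add_zero,
      zero_sub, sub_zero, neg_zero] at h
    have hEE : ρ e (ρ e (ρ a m)) = 0 := by
      linear_combination (norm := module) h
    have h6 := hE3 (ρ a m)
    rw [hEE] at h6
    simp only [map_zero, smul_zero, zero_sub, zero_eq_neg] at h6
    exact h6
end

section
/- Let A be a generalized almost-Jordan algebra for (β, γ) with β ≠ 0, γ ≠ 0, β + γ ≠ 0, β + 2γ ≠ 0 and β + 3γ ≠ 0. Let e ≠ 0 be an idempotent of A and let ρ : A → End_F(M) be an irreducible representation of A with M = M₁, i.e. ρ_e = id_M. Then M is an associative module: for all a, b ∈ A and m ∈ M, ρ_{ab}(m) = ρ_a(ρ_b(m)) and ρ_b(ρ_a(m)) = ρ_a(ρ_b(m)). -/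
theorem stmt8 {F : Type*} [Field F] [Infinite F]
    (hchar2 : (2 : F) ≠ 0) (hchar3 : (3 : F) ≠ 0)
    {A M : Type*} [NonUnitalNonAssocRing A] [Module F A]
    [SMulCommClass F A A] [IsScalarTower F A A]
    [AddCommGroup M] [Module F M]
    {β γ : F} (hβγ : (β, γ) ≠ (0, 0))
    (hcomm : ∀ x y : A, x * y = y * x)
    (hA : IsGAJ F β γ (fun x y : A => x * y))
    (ρ : A →ₗ[F] Module.End F M)
    (hβ : β ≠ 0) (hγ : γ ≠ 0) (hβγ1 : β + γ ≠ 0) (hβ2γ : β + 2 * γ ≠ 0)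
    (hβ3γ : β + 3 * γ ≠ 0)
    (e : A) (he : e * e = e) (hne : e ≠ 0)
    (hρ : IsRep F β γ ρ) (hirr : IsIrreducibleRep F ρ)
    (heid : ρ e = 1) :
    ∀ a b : A, ∀ m : M, ρ (a * b) m = ρ a (ρ b m) ∧ ρ b (ρ a m) = ρ a (ρ b m) := by
  have hcancel : ∀ (c : F), c ≠ 0 → ∀ u v : M, c • u = c • v → u = v := by
    intro c hc u v h
    have h2 := congrArg (fun z => c⁻¹ • z) h
    simpa [smul_smul, inv_mul_cancel₀ hc] using h2
  -- the M-component of the GAJ identity for the split null extension,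
  -- with x = (a, m), y = (b, 0)
  have h2 : ∀ a b : A, ∀ m : M,
      β • ((ρ (b*(a*a)) m + ρ a (ρ b (ρ a m)) + ρ a (ρ b (ρ a m)))
            - (ρ ((b*a)*a) m + ρ a (ρ (b*a) m) + ρ a (ρ a (ρ b m))))
      + γ • ((ρ b (ρ (a*a) m) + ρ b (ρ a (ρ a m)) + ρ b (ρ a (ρ a m)))
            - (ρ ((b*a)*a) m + ρ a (ρ (b*a) m) + ρ a (ρ a (ρ b m)))) = 0 := by
    intro a b m
    have h := congrArg Prod.snd (hρ (a, m) (b, 0))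
    simp only [sneMul, Prod.smul_snd, Prod.snd_add, Prod.snd_sub, Prod.snd_zero,
      map_zero, map_add, add_zero, zero_add, LinearMap.add_apply] at h
    linear_combination (norm := module) h
  -- Peirce relation in A at the idempotent, pushed through ρ
  have hPρ : ∀ c : A, ∀ m : M,
      β • ρ ((c*e)*e) m + γ • ρ (c*e) m = (β+γ) • ρ (((c*e)*e)*e) m := by
    intro c m
    have h := hA e c
    simp only [he] at h
    have h2 := congrArg (fun z : A => ρ z m) h
    simp only [map_add, map_sub, map_smul, map_zero, LinearMap.add_apply,
      LinearMap.sub_apply, LinearMap.smul_apply, LinearMap.zero_apply] at h2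
    linear_combination (norm := module) h2
  have hE1 : ∀ c : A, ∀ m : M,
      (β+2*γ) • ρ c m = (β+γ) • ρ ((c*e)*e) m + γ • ρ (c*e) m := by
    intro c m
    have h := h2 e c m
    simp only [he, heid, Module.End.one_apply] at h
    linear_combination (norm := module) h
  -- key Peirce fact : ρ (c*e) = ρ c
  have hT : ∀ c : A, ∀ m : M, ρ (c*e) m = ρ c m := by
    intro c m
    have e1 := hE1 c m
    have e2 := hE1 (c*e) m
    have e3 := hPρ c m
    have key : (β+γ) • ρ (c*e) m = (β+γ) • ρ ((c*e)*e) m := by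
      linear_combination (norm := module) e2 - e3
    have hq := hcancel _ hβγ1 _ _ key
    have key2 : (β+2*γ) • ρ (c*e) m = (β+2*γ) • ρ c m := by
      linear_combination (norm := module) - e1 + (β+γ) • hq
    exact hcancel _ hβ2γ _ _ key2
  have hTop : ∀ c : A, ρ (c * e) = ρ c := fun c => LinearMap.ext (fun m => hT c m)
  -- (ae)a = a² under ρ
  have hW : ∀ a : A, ∀ m : M, ρ ((a*e)*a) m = ρ (a*a) m := by
    intro a m
    have h := h2 a e m
    rw [hcomm e (a*a), hcomm e a] at h
    simp only [heid, Module.End.one_apply, hTop] at h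
    have key : (β+γ) • ρ (a*a) m = (β+γ) • ρ ((a*e)*a) m := by
      linear_combination (norm := module) h
    exact (hcancel _ hβγ1 _ _ key).symm
  have hWlin : ∀ a b : A, ∀ m : M,
      ρ ((a*e)*b) m + ρ ((b*e)*a) m = ρ (a*b) m + ρ (b*a) m := by
    intro a b m
    have h := hW (a+b) m
    simp only [add_mul, mul_add, map_add, LinearMap.add_apply] at h
    linear_combination (norm := module) h - hW a m - hW b m
  -- ρ a ρ b + ρ b ρ a = 2 ρ (ab)
  have hE : ∀ a b : A, ∀ m : M,
      ρ a (ρ b m) + ρ b (ρ a m) = (2:F) • ρ (a*b) m := by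
    intro a b m
    have hab := h2 a b m
    have heb := h2 e b m
    have haeb := h2 (a+e) b m
    have hba := h2 b a m
    have hea := h2 e a m
    have hbea := h2 (b+e) a m
    have hwl := hWlin a b m
    simp only [mul_add, add_mul, he, hcomm e a, hcomm e b, map_add,
      LinearMap.add_apply, heid, Module.End.one_apply, hTop,
      hcomm b (a*e), hcomm a (b*e), hcomm b a] at hab heb haeb hba hea hbea hwl
    have key : (β+3*γ) • (ρ a (ρ b m) + ρ b (ρ a m)) = (β+3*γ) • ((2:F) • ρ (a*b) m) := by
      linear_combination (norm := module)
        haeb - hab - heb + hbea - hba - hea - (β-γ) • hwl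
    exact hcancel _ hβ3γ _ _ key
  -- the operators ρ a commute
  have hK : ∀ a b : A, ∀ m : M, ρ b (ρ a m) = ρ a (ρ b m) := by
    intro a b m
    have hab := h2 a b m
    have heb := h2 e b m
    have haeb := h2 (a+e) b m
    have hU := hE (a*e) b m
    have hV := hE (b*e) a m
    have hC := hE a b m
    simp only [mul_add, add_mul, he, hcomm e a, hcomm e b, map_add,
      LinearMap.add_apply, heid, Module.End.one_apply, hTop,
      hcomm b (a*e), hcomm a (b*e), hcomm b a] at hab heb haeb hU hV hC
    have key : (3*(β+3*γ)) • (ρ b (ρ a m)) = (3*(β+3*γ)) • (ρ a (ρ b m)) := by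
      linear_combination (norm := module)
        (2:F) • (haeb - hab - heb) + (2*β) • hU - (β+γ) • hV - (2*(β+γ)) • hC
    exact hcancel _ (mul_ne_zero hchar3 hβ3γ) _ _ key
  intro a b m
  refine ⟨?_, hK a b m⟩
  have key : (2:F) • ρ (a*b) m = (2:F) • (ρ a (ρ b m)) := by
    linear_combination (norm := module) hK a b m - hE a b m
  exact hcancel _ hchar2 _ _ key
end

section
/- Let A be a generalized almost-Jordan algebra for (β, γ) with β = 0 (and γ ≠ 0). Let e ≠ 0 be an idempotent of A and let ρ : A → End_F(M) be an irreducible representation of A. Then M = M₀ or M = M₁ ⊕ M₋₁, where M_i = {m ∈ M : ρ_e(m) = i m} for i ∈ {0, 1, −1}. -/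
theorem stmt10 {F : Type*} [Field F] [Infinite F]
    (hchar2 : (2 : F) ≠ 0) (hchar3 : (3 : F) ≠ 0)
    {A M : Type*} [NonUnitalNonAssocRing A] [Module F A]
    [SMulCommClass F A A] [IsScalarTower F A A]
    [AddCommGroup M] [Module F M]
    {β γ : F} (hβγ : (β, γ) ≠ (0, 0))
    (hcomm : ∀ x y : A, x * y = y * x)
    (hA : IsGAJ F β γ (fun x y : A => x * y))
    (ρ : A →ₗ[F] Module.End F M)
    (hβ0 : β = 0) (hγ : γ ≠ 0)
    (e : A) (he : e * e = e) (hne : e ≠ 0)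
    (hρ : IsRep F β γ ρ) (hirr : IsIrreducibleRep F ρ) :
    Module.End.eigenspace (ρ e) 0 = ⊤ ∨
    IsCompl (Module.End.eigenspace (ρ e) 1) (Module.End.eigenspace (ρ e) (-1)) := by
  -- the fundamental module identity
  have hM : ∀ (a b : A) (m n : M),
      ρ b (ρ (a*a) m + ρ a (ρ a m + ρ a m)) + ρ ((a*a)*a) n =
      ρ ((b*a)*a) m + ρ a (ρ (b*a) m + ρ a (ρ b m + ρ a n)) := by
    intro a b m n
    have h := hρ (a, m) (b, n)
    rw [hβ0, zero_smul, zero_add, smul_eq_zero] at h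
    rcases h with h | h
    · exact absurd h hγ
    rw [sub_eq_zero] at h
    exact congrArg Prod.snd h
  -- cube identity
  have hcube : ∀ (a : A) (n : M), ρ ((a*a)*a) n = ρ a (ρ a (ρ a n)) := by
    intro a n
    have h := hM a 0 0 n
    simpa using h
  -- E^3 = E
  have hE3 : ∀ w : M, ρ e w = ρ e (ρ e (ρ e w)) := by
    intro w
    have h := hcube e w
    rwa [he, he] at h
  -- L_e^3 = L_e on A
  have hL3 : ∀ b : A, e * (e * (e * b)) = e * b := by
    intro b
    have h := hA e b
    simp only [hβ0, zero_smul, zero_add, smul_eq_zero] at h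
    rcases h with h | h
    · exact absurd h hγ
    rw [sub_eq_zero] at h
    rw [he, he] at h
    rw [hcomm b e, hcomm (e*b) e, hcomm (e*(e*b)) e] at h
    exact h.symm
  -- hE1 : Peirce relation at a = e on M₀
  have hE1 : ∀ (b : A) (m : M), ρ e m = 0 →
      ρ ((b*e)*e) m + ρ e (ρ (b*e) m + ρ e (ρ b m)) = 0 := by
    intro b m h0
    have h := hM e b m 0
    rw [he] at h
    simp only [h0, map_zero, add_zero, zero_add] at h
    exact h.symm
  -- linearized cube identity
  have hlin : ∀ (c : A) (n : M),
      ρ ((e*c)*e) n + ρ ((e*c)*e) n + ρ (e*c) n =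
      ρ c (ρ e (ρ e n)) + ρ e (ρ c (ρ e n)) + ρ e (ρ e (ρ c n)) := by
    intro c n
    have h1 := hcube (e + c) n
    have h2 := hcube (e - c) n
    have h3 := hcube c n
    simp only [mul_add, add_mul, mul_sub, sub_mul, map_add, map_sub,
      LinearMap.add_apply, LinearMap.sub_apply, he, hcomm c e] at h1 h2
    have key : (2:F) • (ρ ((e*c)*e) n + ρ ((e*c)*e) n + ρ (e*c) n) =
        (2:F) • (ρ c (ρ e (ρ e n)) + ρ e (ρ c (ρ e n)) + ρ e (ρ e (ρ c n))) := by
      linear_combination (norm := module) h1 - h2 - (2:F) • h3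
    exact smul_right_injective M hchar2 key
  -- three eigencomponent cases for b, acting on m ∈ M₀
  have case0 : ∀ (c : A) (m : M), ρ e m = 0 → e * c = 0 → ρ e (ρ c m) = 0 := by
    intro c m h0 hc
    have h := hlin c m
    rw [hc] at h
    simp only [zero_mul, map_zero, LinearMap.zero_apply, h0, add_zero, zero_add] at h
    -- h : 0 = ρ e (ρ e (ρ c m))  (hopefully)
    have h4 := hE3 (ρ c m)
    rw [← h] at h4
    simpa using h4
  have case1 : ∀ (c : A) (m : M), ρ e m = 0 → e * c = c → ρ c m = 0 := by
    intro c m h0 hc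
    have h := hlin c m
    rw [hc, hcomm c e, hc] at h
    simp only [h0, map_zero, add_zero, zero_add] at h
    -- h : ρ c m + ρ c m + ρ c m = ρ e (ρ e (ρ c m))
    set v := ρ c m with hv
    have h4 := hE3 v
    rw [← h] at h4
    simp only [map_add] at h4
    -- h4 : ρ e v = ρ e v + ρ e v + ρ e v
    have h5 : (2:F) • (ρ e v) = 0 := by linear_combination (norm := module) -h4
    have h6 : ρ e v = 0 := (smul_eq_zero.mp h5).resolve_left hchar2
    rw [h6, map_zero] at h
    have h7 : (3:F) • v = 0 := by linear_combination (norm := module) h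
    exact (smul_eq_zero.mp h7).resolve_left hchar3
  have caseneg : ∀ (c : A) (m : M), ρ e m = 0 → e * c = -c → ρ c m = 0 := by
    intro c m h0 hc
    set v := ρ c m with hv
    have h := hlin c m
    rw [hc] at h
    rw [show (-c)*e = c by rw [hcomm (-c) e, mul_neg, hc, neg_neg]] at h
    simp only [h0, map_zero, add_zero, zero_add, map_neg, LinearMap.neg_apply] at h
    -- h : v + v + (-v) = ρ e (ρ e v) (shape?)
    have h1 := hE1 c m h0
    rw [hcomm c e, hc] at h1
    rw [show (-c)*e = c by rw [hcomm (-c) e, mul_neg, hc, neg_neg]] at h1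
    simp only [map_add, map_neg, LinearMap.neg_apply] at h1
    -- h1 : v + (-(ρ e v) + ρ e (ρ e v)) = 0
    have hEEv : ρ e (ρ e v) = v := by linear_combination (norm := module) -h
    have hEv : ρ e v = v + v := by
      rw [hEEv] at h1
      linear_combination (norm := module) -h1
    have h9 : (3:F) • v = 0 := by
      have h8 : ρ e (ρ e v) = (v + v) + (v + v) := by rw [hEv, map_add, hEv]
      rw [hEEv] at h8
      linear_combination (norm := module) -h8
    exact (smul_eq_zero.mp h9).resolve_left hchar3
  -- invariance of M₀
  have hinv : ∀ (b : A) (m : M), ρ e m = 0 → ρ e (ρ b m) = 0 := by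
    intro b m h0
    have hb0 : e * (b - e*(e*b)) = 0 := by rw [mul_sub, hL3, sub_self]
    have hb1 : e * (e*(e*b) + e*b) = e*(e*b) + e*b := by
      rw [mul_add, hL3, add_comm]
    have hbn : e * (e*(e*b) - e*b) = -(e*(e*b) - e*b) := by
      rw [mul_sub, hL3, neg_sub]
    have c0 := case0 (b - e*(e*b)) m h0 hb0
    have c1 := case1 (e*(e*b) + e*b) m h0 hb1
    have cn := caseneg (e*(e*b) - e*b) m h0 hbn
    simp only [map_sub, map_add, LinearMap.sub_apply, LinearMap.add_apply] at c0 c1 cn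
    have c1' : ρ e (ρ (e*(e*b)) m) + ρ e (ρ (e*b) m) = 0 := by
      rw [← map_add, c1, map_zero]
    have cn' : ρ e (ρ (e*(e*b)) m) - ρ e (ρ (e*b) m) = 0 := by
      rw [← map_sub, cn, map_zero]
    have key : (2:F) • (ρ e (ρ b m)) = 0 := by
      linear_combination (norm := module) (2:F) • c0 + c1' + cn'
    exact (smul_eq_zero.mp key).resolve_left hchar2
  -- now the dichotomy
  have hinvN : ∀ a : A, ∀ m ∈ Module.End.eigenspace (ρ e) 0, ρ a m ∈ Module.End.eigenspace (ρ e) 0 := by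
    intro a m hm
    rw [Module.End.mem_eigenspace_iff, zero_smul] at hm ⊢
    exact hinv a m hm
  rcases hirr.2 _ hinvN with hbot | htop
  · right
    constructor
    · rw [Submodule.disjoint_def]
      intro m hm1 hmn
      rw [Module.End.mem_eigenspace_iff, one_smul] at hm1
      rw [Module.End.mem_eigenspace_iff] at hmn
      have : (2:F) • m = 0 := by
        have := hm1.symm.trans hmn
        rw [neg_smul, one_smul] at this
        linear_combination (norm := module) this
      exact (smul_eq_zero.mp this).resolve_left hchar2
    · rw [codisjoint_iff, Submodule.eq_top_iff']
      intro m
      have hX : ρ e (ρ e m) = m := by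
        have hm0 : m - ρ e (ρ e m) ∈ Module.End.eigenspace (ρ e) 0 := by
          rw [Module.End.mem_eigenspace_iff, zero_smul, map_sub, ← hE3, sub_self]
        rw [hbot, Submodule.mem_bot, sub_eq_zero] at hm0
        exact hm0.symm
      refine Submodule.mem_sup.mpr ⟨(2:F)⁻¹ • (ρ e (ρ e m) + ρ e m), ?_,
        (2:F)⁻¹ • (ρ e (ρ e m) - ρ e m), ?_, ?_⟩
      · rw [Module.End.mem_eigenspace_iff, one_smul, map_smul, map_add, ← hE3]
        module
      · rw [Module.End.mem_eigenspace_iff, map_smul, map_sub, ← hE3]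
        module
      · have h2 : (2:F)⁻¹ + (2:F)⁻¹ = 1 := by
          rw [← two_mul, mul_inv_cancel₀ hchar2]
        rw [smul_add, smul_sub]
        rw [show ∀ x y : M, ((2:F)⁻¹ • x + (2:F)⁻¹ • y) + ((2:F)⁻¹ • x - (2:F)⁻¹ • y)
            = ((2:F)⁻¹ + (2:F)⁻¹) • x from fun x y => by rw [add_smul]; abel]
        rw [h2, one_smul, hX]
  · left; exact htop
end

section
/- Let A be a generalized almost-Jordan algebra for (β, γ) with γ = 0 (hence β ≠ 0). Let e ≠ 0 be an idempotent of A and let ρ : A → End_F(M) be an irreducible representation of A. Then M = M₀ or M = M₁, where M₀ = {m ∈ M : ρ_e(ρ_e(m)) = 0} and M₁ = {m ∈ M : ρ_e(m) = m}. -/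
theorem stmt11 {F : Type*} [Field F] [Infinite F]
    (hchar2 : (2 : F) ≠ 0) (hchar3 : (3 : F) ≠ 0)
    {A M : Type*} [NonUnitalNonAssocRing A] [Module F A]
    [SMulCommClass F A A] [IsScalarTower F A A]
    [AddCommGroup M] [Module F M]
    {β γ : F} (hβγ : (β, γ) ≠ (0, 0))
    (hcomm : ∀ x y : A, x * y = y * x)
    (hA : IsGAJ F β γ (fun x y : A => x * y))
    (ρ : A →ₗ[F] Module.End F M)
    (hγ0 : γ = 0) (hβ : β ≠ 0)
    (e : A) (he : e * e = e) (hne : e ≠ 0)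
    (hρ : IsRep F β γ ρ) (hirr : IsIrreducibleRep F ρ) :
    LinearMap.ker (ρ e ∘ₗ ρ e) = ⊤ ∨ Module.End.eigenspace (ρ e) 1 = ⊤ := by
  have hS : ∀ x y : A × M, sneMul F ρ (sneMul F ρ y (sneMul F ρ x x)) x
      = sneMul F ρ (sneMul F ρ (sneMul F ρ y x) x) x := by
    intro x y
    have h := hρ x y
    rw [hγ0, zero_smul, add_zero, smul_eq_zero] at h
    rcases h with h | h
    · exact absurd h hβ
    · exact sub_eq_zero.mp h
  have hM : ∀ (u v : A) (p q : M),
      ρ (v*(u*u)) p + ρ u (ρ v (ρ u p + ρ u p) + ρ (u*u) q)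
      = ρ ((v*u)*u) p + ρ u (ρ (v*u) p + ρ u (ρ v p + ρ u q)) := by
    intro u v p q
    have h := congrArg Prod.snd (hS (u, p) (v, q))
    simpa [sneMul] using h
  -- (I):
  have hI : ∀ (u : A) (q : M), ρ u (ρ (u*u) q) = ρ u (ρ u (ρ u q)) := by
    intro u q
    have h := hM u 0 0 q
    simpa using h
  -- (II):
  have hII : ∀ (u v : A) (p : M),
      ρ (v*(u*u)) p + ρ u (ρ v (ρ u p)) + ρ u (ρ v (ρ u p))
      = ρ ((v*u)*u) p + ρ u (ρ (v*u) p) + ρ u (ρ u (ρ v p)) := by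
    intro u v p
    have h := hM u v p 0
    simp only [map_zero, add_zero, map_add] at h
    linear_combination (norm := module) h
  -- F1 : E² = E³
  have F1 : ∀ m : M, ρ e (ρ e m) = ρ e (ρ e (ρ e m)) := by
    intro m
    have h := hI e m
    rwa [he] at h
  -- F3 (†): from hII at u = e
  have F3 : ∀ (v : A) (p : M),
      ρ (e*v) p + ρ e (ρ v (ρ e p)) + ρ e (ρ v (ρ e p))
      = ρ (e*(e*v)) p + ρ e (ρ (e*v) p) + ρ e (ρ e (ρ v p)) := by
    intro v p
    have h := hII e v p
    rw [he, hcomm v e, hcomm (e*v) e] at h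
    exact h
  -- F2 (III): from linearizing hI at u = e ± v
  have F2 : ∀ (v : A) (q : M),
      ρ v (ρ e q) + ρ e (ρ (e*v) q) + ρ e (ρ (e*v) q)
      = ρ e (ρ e (ρ v q)) + ρ e (ρ v (ρ e q)) + ρ v (ρ e (ρ e q)) := by
    intro v q
    have h1 := hI (e + v) q
    have h2 := hI (e - v) q
    have h3 := hI v q
    simp only [mul_add, add_mul, mul_sub, sub_mul, he, hcomm v e, map_add, map_sub,
      LinearMap.add_apply, LinearMap.sub_apply] at h1 h2
    apply smul_right_injective M hchar2
    simp only [smul_add]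
    linear_combination (norm := module) h1 - h2 - (2:F) • h3
  -- L² = L³ on A
  have hL : ∀ y : A, e*(e*y) = e*(e*(e*y)) := by
    intro y
    have h := hA e y
    simp only [hγ0, zero_smul, add_zero, smul_eq_zero] at h
    rcases h with h | h
    · exact absurd h hβ
    · have h' := sub_eq_zero.mp h
      rw [he, hcomm y e, hcomm (e*y) e, hcomm (e*(e*y)) e] at h'
      exact h'
  -- type 1 invariance
  have hT1 : ∀ a : A, e*a = a → ∀ m : M, ρ e (ρ e m) = 0 → ρ e (ρ e (ρ a m)) = 0 := by
    intro a ha m hm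
    have h3u := F3 a (ρ e m)
    rw [ha, ha, hm] at h3u
    simp only [map_zero, LinearMap.zero_apply] at h3u
    have h2u := F2 a (ρ e m)
    rw [ha, hm] at h2u
    simp only [map_zero, LinearMap.zero_apply] at h2u
    have hx : (3:F) • (ρ e (ρ a (ρ e m))) = 0 := by
      linear_combination (norm := module) h2u - h3u
    have hx0 : ρ e (ρ a (ρ e m)) = 0 := by
      rcases smul_eq_zero.mp hx with h | h
      · exact absurd h hchar3
      · exact h
    have h3m := F3 a m
    rw [ha, ha, hx0] at h3m
    have h5 := congrArg (ρ e) h3m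
    simp only [map_add, map_zero] at h5
    rw [← F1 (ρ a m)] at h5
    have h6 : (2:F) • (ρ e (ρ e (ρ a m))) = 0 := by
      linear_combination (norm := module) -h5
    rcases smul_eq_zero.mp h6 with h | h
    · exact absurd h hchar2
    · exact h
  -- type 0 invariance
  have hT0 : ∀ a : A, e*(e*a) = 0 → ∀ m : M, ρ e (ρ e m) = 0 → ρ e (ρ e (ρ a m)) = 0 := by
    intro a ha m hm
    -- (x): E² ρ_b u = 0 where b = e*a, u = ρ e m
    have hx := F2 (e*a) (ρ e m)
    rw [ha, hm] at hx
    simp only [map_zero, LinearMap.zero_apply] at hx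
    -- (v)
    have hv := F3 a (ρ e m)
    rw [ha, hm] at hv
    simp only [map_zero, LinearMap.zero_apply] at hv
    -- (viii)
    have hviii := F2 a (ρ e m)
    rw [hm] at hviii
    simp only [map_zero, LinearMap.zero_apply] at hviii
    -- ρ_b u = 3 • X where X = ρ e (ρ (e*a) (ρ e m))
    have hbu : ρ (e*a) (ρ e m) = (3:F) • (ρ e (ρ (e*a) (ρ e m))) := by
      linear_combination (norm := module) hv - hviii
    have h7 := congrArg (ρ e) hbu
    rw [map_smul] at h7
    rw [show ρ e (ρ e (ρ (e*a) (ρ e m))) = 0 from by linear_combination (norm := module) -hx] at h7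
    rw [smul_zero] at h7
    -- h7 : ρ e (ρ (e*a) (ρ e m)) = 0,  i.e. X = 0
    have hbu0 : ρ (e*a) (ρ e m) = 0 := by rw [hbu, h7, smul_zero]
    have haau : ρ e (ρ e (ρ a (ρ e m))) = 0 := by
      linear_combination (norm := module) (2:F) • h7 - hviii
    -- (B2m): E² ρ_b m = 0
    have hB2 := F2 (e*a) m
    rw [ha, hm] at hB2
    simp only [map_zero, LinearMap.zero_apply] at hB2
    have hbm : ρ e (ρ e (ρ (e*a) m)) = 0 := by
      linear_combination (norm := module) hbu0 - h7 - hB2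
    -- (IIIₐm)
    have hFam := F2 a m
    rw [hm] at hFam
    simp only [map_zero, LinearMap.zero_apply] at hFam
    have h8 := congrArg (ρ e) (congrArg (ρ e) hFam)
    simp only [map_add, map_zero] at h8
    rw [hbm, haau] at h8
    rw [← F1 (ρ a m), ← F1 (ρ a m)] at h8
    simp only [map_zero] at h8
    linear_combination (norm := module) -h8
  -- full invariance of ker E²
  have hInv : ∀ (a : A) (m : M), ρ e (ρ e m) = 0 → ρ e (ρ e (ρ a m)) = 0 := by
    intro a m hm
    have h1 : e * (e * (a - e*(e*a))) = 0 := by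
      rw [mul_sub, mul_sub, ← hL (e*a), ← hL a, sub_self]
    have ht0 := hT0 _ h1 m hm
    have ht1 := hT1 _ ((hL a).symm) m hm
    have hsplit : ρ a m = ρ (a - e*(e*a)) m + ρ (e*(e*a)) m := by
      rw [← LinearMap.add_apply, ← map_add, sub_add_cancel]
    rw [hsplit, map_add, map_add, ht0, ht1, add_zero]
  -- assembly
  rcases hirr with ⟨-, hN⟩
  rcases hN (LinearMap.ker (ρ e ∘ₗ ρ e)) (by
      intro a m hm
      rw [LinearMap.mem_ker, LinearMap.comp_apply] at hm ⊢
      exact hInv a m hm) with hbot | htop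
  · right
    rw [Submodule.eq_top_iff']
    intro m
    rw [Module.End.mem_eigenspace_iff, one_smul]
    have hmem : ρ e m - m ∈ LinearMap.ker (ρ e ∘ₗ ρ e) := by
      rw [LinearMap.mem_ker, LinearMap.comp_apply, map_sub, map_sub, ← F1 m, sub_self]
    rw [hbot, Submodule.mem_bot] at hmem
    exact sub_eq_zero.mp hmem
  · left
    exact htop
end

section
/- Let A be a generalized almost-Jordan algebra for (β, γ) with γ = 0 (hence β ≠ 0). Let e ≠ 0 be an idempotent of A, set A₁ = {x ∈ A : ex = x}, and let ρ : A → End_F(M) be an irreducible representation of A. If A₁·A₁ ⊆ A₁ and M = M₁ = {m ∈ M : ρ_e(m) = m}, then M is an associative module: for all a, b ∈ A and m ∈ M, ρ_{ab}(m) = ρ_a(ρ_b(m)) and ρ_b(ρ_a(m)) = ρ_a(ρ_b(m)). -/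
theorem stmt12 {F : Type*} [Field F] [Infinite F]
    (hchar2 : (2 : F) ≠ 0) (hchar3 : (3 : F) ≠ 0)
    {A M : Type*} [NonUnitalNonAssocRing A] [Module F A]
    [SMulCommClass F A A] [IsScalarTower F A A]
    [AddCommGroup M] [Module F M]
    {β γ : F} (hβγ : (β, γ) ≠ (0, 0))
    (hcomm : ∀ x y : A, x * y = y * x)
    (hA : IsGAJ F β γ (fun x y : A => x * y))
    (ρ : A →ₗ[F] Module.End F M)
    (hγ0 : γ = 0) (hβ : β ≠ 0)
    (e : A) (he : e * e = e) (hne : e ≠ 0)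
    (hρ : IsRep F β γ ρ) (hirr : IsIrreducibleRep F ρ)
    (hA1 : ∀ a b : A, e * a = a → e * b = b → e * (a * b) = a * b)
    (heid : ρ e = 1) :
    ∀ a b : A, ∀ m : M, ρ (a * b) m = ρ a (ρ b m) ∧ ρ b (ρ a m) = ρ a (ρ b m) := by
  
  subst hγ0
  -- Extract the second (module) component of the GAJ identity for the split
  -- null extension, with x = (a, m), y = (b, n).
  have key : ∀ (a b : A) (m n : M),
      ρ (b*(a*a)) m + ρ a (ρ b (ρ a m + ρ a m) + ρ (a*a) n)
        = ρ ((b*a)*a) m + ρ a (ρ (b*a) m + ρ a (ρ b m + ρ a n)) := by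
    intro a b m n
    have h := hρ (a, m) (b, n)
    rw [zero_smul, add_zero] at h
    have h2 := congrArg (fun z => β⁻¹ • z) h
    simp only [smul_smul, inv_mul_cancel₀ hβ, one_smul, smul_zero] at h2
    have h3 := congrArg Prod.snd (sub_eq_zero.mp h2)
    simpa [sneMul] using h3
  -- Operator form: ρ a ∘ ρ (a²) = (ρ a)³
  have hI : ∀ a : A, ρ a * ρ (a*a) = ρ a * ρ a * ρ a := by
    intro a
    ext n
    have h := key a 0 0 n
    simpa using h
  -- Operator form of the linearized identity (coefficient of m)
  have hQ : ∀ a b : A, ρ (b*(a*a)) + (ρ a * ρ b * ρ a + ρ a * ρ b * ρ a)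
      = ρ ((b*a)*a) + (ρ a * ρ (b*a) + ρ a * ρ a * ρ b) := by
    intro a b
    ext m
    have h := key a b m 0
    simp only [map_zero, add_zero, map_add] at h
    simp only [LinearMap.add_apply, Module.End.mul_apply]
    abel_nf
    abel_nf at h
    exact h
  -- cancellation helpers (char ≠ 2, 3)
  have c2 : ∀ X Y : Module.End F M, X + X = Y + Y → X = Y := by
    intro X Y h
    have h' : (2:F)⁻¹ • ((2:F) • X) = (2:F)⁻¹ • ((2:F) • Y) := by
      rw [two_smul, two_smul, h]
    simpa [smul_smul, inv_mul_cancel₀ hchar2] using h'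
  have c3 : ∀ X Y : Module.End F M, X + X + X = Y + Y + Y → X = Y := by
    intro X Y h
    have h' : (3:F)⁻¹ • ((3:F) • X) = (3:F)⁻¹ • ((3:F) • Y) := by
      rw [show ((3:F) • X) = X + X + X by
            rw [show (3:F) = 2+1 by norm_num, add_smul, two_smul, one_smul],
          show ((3:F) • Y) = Y + Y + Y by
            rw [show (3:F) = 2+1 by norm_num, add_smul, two_smul, one_smul], h]
    simpa [smul_smul, inv_mul_cancel₀ hchar3] using h'
  -- expansions of squares involving the idempotent e
  have exp1 : ∀ a : A, (a+e)*(a+e) = a*a + (a*e + a*e) + e := by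
    intro a; rw [add_mul, mul_add, mul_add, hcomm e a, he]; abel
  have exp2 : ∀ a : A, (a-e)*(a-e) = a*a - (a*e + a*e) + e := by
    intro a; rw [sub_mul, mul_sub, mul_sub, hcomm e a, he]; abel
  have h1 : ∀ a : A, (ρ a + 1) * (ρ (a*a) + (ρ (a*e) + ρ (a*e)) + 1)
      = (ρ a + 1) * (ρ a + 1) * (ρ a + 1) := by
    intro a
    have h := hI (a+e)
    rw [exp1 a] at h
    simp only [map_add, heid] at h
    exact h
  have h2 : ∀ a : A, (ρ a - 1) * (ρ (a*a) - (ρ (a*e) + ρ (a*e)) + 1)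
      = (ρ a - 1) * (ρ a - 1) * (ρ a - 1) := by
    intro a
    have h := hI (a-e)
    rw [exp2 a] at h
    simp only [map_add, map_sub, heid] at h
    exact h
  -- ρ(a·e) = ρ(a)
  have hE : ∀ a : A, ρ (a*e) = ρ a := by
    intro a
    apply c2; apply c2
    have hd : (ρ (a*e) + ρ (a*e) + (ρ (a*e) + ρ (a*e))) - (ρ a + ρ a + (ρ a + ρ a)) =
        ((ρ a + 1) * (ρ (a*a) + (ρ (a*e) + ρ (a*e)) + 1) - (ρ a + 1) * (ρ a + 1) * (ρ a + 1))
        + ((ρ a - 1) * (ρ (a*a) - (ρ (a*e) + ρ (a*e)) + 1) - (ρ a - 1) * (ρ a - 1) * (ρ a - 1))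
        - ((ρ a * ρ (a*a) - ρ a * ρ a * ρ a) + (ρ a * ρ (a*a) - ρ a * ρ a * ρ a)) := by
      noncomm_ring
    rw [h1 a, h2 a, hI a] at hd
    simpa [sub_eq_zero] using hd
  -- ρ(a²) = ρ(a)²
  have hSq : ∀ a : A, ρ (a*a) = ρ a * ρ a := by
    intro a
    apply c2
    have hd : (ρ (a*a) + ρ (a*a)) - (ρ a * ρ a + ρ a * ρ a) =
        ((ρ a + 1) * (ρ (a*a) + (ρ (a*e) + ρ (a*e)) + 1) - (ρ a + 1) * (ρ a + 1) * (ρ a + 1))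
        - ((ρ a - 1) * (ρ (a*a) - (ρ (a*e) + ρ (a*e)) + 1) - (ρ a - 1) * (ρ a - 1) * (ρ a - 1))
        - (ρ a * (ρ (a*e) - ρ a) + ρ a * (ρ (a*e) - ρ a) + ρ a * (ρ (a*e) - ρ a)
            + ρ a * (ρ (a*e) - ρ a)) := by
      noncomm_ring
    rw [h1 a, h2 a, hE a] at hd
    simpa [sub_eq_zero] using hd
  -- 2ρ(ba) = ρ(b)ρ(a) + ρ(a)ρ(b)
  have hS : ∀ a b : A, ρ (b*a) + ρ (b*a) = ρ b * ρ a + ρ a * ρ b := by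
    intro a b
    have exp3 : (a+b)*(a+b) = a*a + (b*a + b*a) + b*b := by
      rw [add_mul, mul_add, mul_add, hcomm a b]; abel
    have h := hSq (a+b)
    rw [exp3] at h
    simp only [map_add] at h
    rw [hSq a, hSq b] at h
    have hd : (ρ (b*a) + ρ (b*a)) - (ρ b * ρ a + ρ a * ρ b) =
        (ρ a * ρ a + (ρ (b*a) + ρ (b*a)) + ρ b * ρ b) - (ρ a + ρ b) * (ρ a + ρ b) := by
      noncomm_ring
    rw [h] at hd
    simpa [sub_eq_zero] using hd
  -- the key cubic relation: vu² + 4uvu = 5u²v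
  have hP : ∀ a b : A,
      ρ b * (ρ a * ρ a) + (ρ a * ρ b * ρ a + ρ a * ρ b * ρ a + ρ a * ρ b * ρ a + ρ a * ρ b * ρ a)
      = ρ a * ρ a * ρ b + ρ a * ρ a * ρ b + ρ a * ρ a * ρ b + ρ a * ρ a * ρ b + ρ a * ρ a * ρ b := by
    intro a b
    have hs2 : ρ (b*(a*a)) + ρ (b*(a*a)) = ρ b * (ρ a * ρ a) + (ρ a * ρ a) * ρ b := by
      have h := hS (a*a) b
      rwa [hSq a] at h
    have hs3 : ρ ((b*a)*a) + ρ ((b*a)*a) = ρ (b*a) * ρ a + ρ a * ρ (b*a) := hS a (b*a)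
    have hs4 : ρ (b*a) + ρ (b*a) = ρ b * ρ a + ρ a * ρ b := hS a b
    have hq := hQ a b
    have hd : (ρ b * (ρ a * ρ a) + (ρ a * ρ b * ρ a + ρ a * ρ b * ρ a + ρ a * ρ b * ρ a + ρ a * ρ b * ρ a))
        - (ρ a * ρ a * ρ b + ρ a * ρ a * ρ b + ρ a * ρ a * ρ b + ρ a * ρ a * ρ b + ρ a * ρ a * ρ b) =
        (((ρ (b*(a*a)) + (ρ a * ρ b * ρ a + ρ a * ρ b * ρ a)) - (ρ ((b*a)*a) + (ρ a * ρ (b*a) + ρ a * ρ a * ρ b)))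
          + ((ρ (b*(a*a)) + (ρ a * ρ b * ρ a + ρ a * ρ b * ρ a)) - (ρ ((b*a)*a) + (ρ a * ρ (b*a) + ρ a * ρ a * ρ b)))
          + ((ρ (b*(a*a)) + (ρ a * ρ b * ρ a + ρ a * ρ b * ρ a)) - (ρ ((b*a)*a) + (ρ a * ρ (b*a) + ρ a * ρ a * ρ b)))
          + ((ρ (b*(a*a)) + (ρ a * ρ b * ρ a + ρ a * ρ b * ρ a)) - (ρ ((b*a)*a) + (ρ a * ρ (b*a) + ρ a * ρ a * ρ b))))
        - (((ρ (b*(a*a)) + ρ (b*(a*a))) - (ρ b * (ρ a * ρ a) + (ρ a * ρ a) * ρ b))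
          + ((ρ (b*(a*a)) + ρ (b*(a*a))) - (ρ b * (ρ a * ρ a) + (ρ a * ρ a) * ρ b)))
        + (((ρ ((b*a)*a) + ρ ((b*a)*a)) - (ρ (b*a) * ρ a + ρ a * ρ (b*a)))
          + ((ρ ((b*a)*a) + ρ ((b*a)*a)) - (ρ (b*a) * ρ a + ρ a * ρ (b*a))))
        + (ρ a * ((ρ (b*a) + ρ (b*a)) - (ρ b * ρ a + ρ a * ρ b))
          + ρ a * ((ρ (b*a) + ρ (b*a)) - (ρ b * ρ a + ρ a * ρ b))
          + ρ a * ((ρ (b*a) + ρ (b*a)) - (ρ b * ρ a + ρ a * ρ b)))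
        + ((ρ (b*a) + ρ (b*a)) - (ρ b * ρ a + ρ a * ρ b)) * ρ a := by
      noncomm_ring
    rw [hq, hs2, hs3, hs4] at hd
    simpa [sub_eq_zero] using hd
  -- commutativity of the operators
  have hC : ∀ a b : A, ρ b * ρ a = ρ a * ρ b := by
    intro a b
    have hp := hP a b
    have hp' := hP (a+e) b
    rw [map_add, heid] at hp'
    apply c3
    apply c2
    have hd : ((ρ b * ρ a + ρ b * ρ a + ρ b * ρ a) + (ρ b * ρ a + ρ b * ρ a + ρ b * ρ a))
        - ((ρ a * ρ b + ρ a * ρ b + ρ a * ρ b) + (ρ a * ρ b + ρ a * ρ b + ρ a * ρ b)) =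
        ((ρ b * ((ρ a + 1) * (ρ a + 1)) + ((ρ a + 1) * ρ b * (ρ a + 1) + (ρ a + 1) * ρ b * (ρ a + 1) + (ρ a + 1) * ρ b * (ρ a + 1) + (ρ a + 1) * ρ b * (ρ a + 1)))
          - ((ρ a + 1) * (ρ a + 1) * ρ b + (ρ a + 1) * (ρ a + 1) * ρ b + (ρ a + 1) * (ρ a + 1) * ρ b + (ρ a + 1) * (ρ a + 1) * ρ b + (ρ a + 1) * (ρ a + 1) * ρ b))
        - ((ρ b * (ρ a * ρ a) + (ρ a * ρ b * ρ a + ρ a * ρ b * ρ a + ρ a * ρ b * ρ a + ρ a * ρ b * ρ a))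
          - (ρ a * ρ a * ρ b + ρ a * ρ a * ρ b + ρ a * ρ a * ρ b + ρ a * ρ a * ρ b + ρ a * ρ a * ρ b)) := by
      noncomm_ring
    rw [hp, hp'] at hd
    simpa [sub_eq_zero] using hd
  intro a b m
  have hmul : ρ (a*b) = ρ a * ρ b := by
    apply c2
    have h := hS b a
    rwa [hC a b] at h
  constructor
  · have := DFunLike.congr_fun hmul m
    simpa [Module.End.mul_apply] using this
  · have := DFunLike.congr_fun (hC a b) m
    simpa [Module.End.mul_apply] using this
end

section
/- Let A be a generalized almost-Jordan algebra for (β, γ) with β + γ = 0 (and γ ≠ 0). Let e ≠ 0 be an idempotent of A and let ρ : A → End_F(M) be an irreducible representation of A. Then M = M₀ or M = M₁, where M_i = {m ∈ M : ρ_e(m) = i m} for i = 0, 1. -/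
section aux

variable {F : Type*} [Field F]

private lemma cubic_aux {M : Type*} [AddCommGroup M] [Module F M]
    (h2 : (2:F) ≠ 0) (h3 : (3:F) ≠ 0) {u v w : M}
    (h : ∀ t : F, t • u + (t*t) • v + (t*t*t) • w = 0) : u = 0 := by
  have e1 := h 1
  have e2 := h (-1)
  have e3 := h 2
  have hv : (2:F) • v = 0 := by linear_combination (norm := module) e1 + e2
  have hv0 : v = 0 := by
    rcases smul_eq_zero.mp hv with h' | h'
    · exact absurd h' h2
    · exact h'
  have h6 : (6:F) ≠ 0 := by
    have : (6:F) = 2 * 3 := by norm_num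
    rw [this]
    exact mul_ne_zero h2 h3
  have hw : (6:F) • w = 0 := by
    rw [hv0] at e1 e3
    linear_combination (norm := module) e3 - (2:F) • e1
  have hw0 : w = 0 := by
    rcases smul_eq_zero.mp hw with h' | h'
    · exact absurd h' h6
    · exact h'
  rw [hv0, hw0] at e1
  linear_combination (norm := module) e1

end aux
theorem stmt13 {F : Type*} [Field F] [Infinite F]
    (hchar2 : (2 : F) ≠ 0) (hchar3 : (3 : F) ≠ 0)
    {A M : Type*} [NonUnitalNonAssocRing A] [Module F A]
    [SMulCommClass F A A] [IsScalarTower F A A]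
    [AddCommGroup M] [Module F M]
    {β γ : F} (hβγ : (β, γ) ≠ (0, 0))
    (hcomm : ∀ x y : A, x * y = y * x)
    (hA : IsGAJ F β γ (fun x y : A => x * y))
    (ρ : A →ₗ[F] Module.End F M)
    (hβγ0 : β + γ = 0) (hγ : γ ≠ 0)
    (e : A) (he : e * e = e) (hne : e ≠ 0)
    (hρ : IsRep F β γ ρ) (hirr : IsIrreducibleRep F ρ) :
    Module.End.eigenspace (ρ e) 0 = ⊤ ∨ Module.End.eigenspace (ρ e) 1 = ⊤ := by
  have hβ : β = -γ := eq_neg_of_add_eq_zero_left hβγ0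
  -- Reduced identity on A : y * ((x*x)*x) = (y*(x*x))*x
  have hAred : ∀ x y : A, y * ((x*x)*x) = (y*(x*x))*x := by
    intro x y
    have h := hA x y
    rw [hβ] at h
    have h2 : γ • (y * ((x*x)*x) - (y*(x*x))*x) = 0 := by
      linear_combination (norm := module) h
    rcases smul_eq_zero.mp h2 with h' | h'
    · exact absurd h' hγ
    · exact sub_eq_zero.mp h'
  -- Reduced identity on the split null extension, specialized:
  have hkey : ∀ (c : A) (m : M), ρ ((c*c)*c) m = ρ c (ρ (c*c) m) := by
    intro c m
    have h := hρ (c, (0:M)) ((0:A), m)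
    have h3 := congrArg Prod.snd h
    simp only [sneMul, Prod.snd_add, Prod.smul_snd, Prod.snd_sub, Prod.snd_zero,
      map_zero, LinearMap.zero_apply, add_zero, zero_add, LinearMap.map_zero] at h3
    rw [hβ] at h3
    have h4 : γ • (ρ ((c*c)*c) m - ρ c (ρ (c*c) m)) = 0 := by
      linear_combination (norm := module) h3
    rcases smul_eq_zero.mp h4 with h' | h'
    · exact absurd h' hγ
    · exact sub_eq_zero.mp h'
  -- ρ e is idempotent
  have hee : ∀ m : M, ρ e (ρ e m) = ρ e m := by
    intro m
    have := hkey e m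
    rw [he, he] at this
    exact this.symm
  -- (y*e)*e = y*e in A
  have hidem : ∀ y : A, (y*e)*e = y*e := by
    intro y
    have := hAred e y
    rw [he, he] at this
    exact this.symm
  -- Lemma B : a in A₀, m in M₁  ⟹ ρ a m = 0
  have lemB : ∀ (a : A) (m : M), e * a = 0 → ρ e m = m → ρ a m = 0 := by
    intro a m h0 hm
    have h0' : a * e = 0 := by rw [hcomm]; exact h0
    have key : ∀ t : F,
        t • (-(ρ a m)) + (t*t) • (ρ ((a*a)*e) m - ρ e (ρ (a*a) m))
          + (t*t*t) • (ρ ((a*a)*a) m - ρ a (ρ (a*a) m)) = 0 := by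
      intro t
      have sq : (e + t • a) * (e + t • a) = e + (t*t) • (a*a) := by
        simp only [mul_add, add_mul, smul_mul_assoc, mul_smul_comm, smul_smul, he, h0, h0',
          smul_zero, zero_add, add_zero]
      have cube : ((e + t • a) * (e + t • a)) * (e + t • a)
          = e + (t*t) • ((a*a)*e) + (t*t*t) • ((a*a)*a) := by
        rw [sq]
        simp only [mul_add, add_mul, smul_mul_assoc, mul_smul_comm, smul_smul, he, h0, h0',
          smul_zero, zero_add, add_zero]
        module
      have h := hkey (e + t • a) m
      rw [cube, sq] at h
      simp only [map_add, map_smul, LinearMap.add_apply, LinearMap.smul_apply, hm] at h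
      linear_combination (norm := module) h
    have := cubic_aux hchar2 hchar3 key
    rwa [neg_eq_zero] at this
  -- Lemma C : a in A₁, m in M₁ ⟹ ρ a m in M₁
  have lemC : ∀ (a : A) (m : M), e * a = a → ρ e m = m → ρ e (ρ a m) = ρ a m := by
    intro a m h1 hm
    have h1' : a * e = a := by rw [hcomm]; exact h1
    have key : ∀ t : F,
        t • ((ρ a m + ρ a m) - (ρ e (ρ a m) + ρ e (ρ a m)))
          + (t*t) • ((ρ (a*a) m + ρ (a*a) m + ρ ((a*a)*e) m)
              - (ρ e (ρ (a*a) m) + ρ a (ρ a m) + ρ a (ρ a m)))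
          + (t*t*t) • (ρ ((a*a)*a) m - ρ a (ρ (a*a) m)) = 0 := by
      intro t
      have sq : (e + t • a) * (e + t • a) = e + (t+t) • a + (t*t) • (a*a) := by
        simp only [mul_add, add_mul, smul_mul_assoc, mul_smul_comm, smul_smul, he, h1, h1']
        module
      have cube : ((e + t • a) * (e + t • a)) * (e + t • a)
          = e + (t+t+t) • a + ((t*t)+(t*t)) • (a*a)
            + (t*t) • ((a*a)*e) + (t*t*t) • ((a*a)*a) := by
        rw [sq]
        simp only [mul_add, add_mul, smul_mul_assoc, mul_smul_comm, smul_smul, he, h1, h1']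
        module
      have h := hkey (e + t • a) m
      rw [cube, sq] at h
      simp only [map_add, map_smul, LinearMap.add_apply, LinearMap.smul_apply, hm] at h
      linear_combination (norm := module) h
    have hU := cubic_aux hchar2 hchar3 key
    have h2 : (2:F) • (ρ a m - ρ e (ρ a m)) = 0 := by
      linear_combination (norm := module) hU
    rcases smul_eq_zero.mp h2 with h' | h'
    · exact absurd h' hchar2
    · exact (sub_eq_zero.mp h').symm
  -- The eigenspace M₁ is invariant under every ρ a
  set N := Module.End.eigenspace (ρ e) 1 with hN
  have hmemN : ∀ m : M, m ∈ N ↔ ρ e m = m := by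
    intro m
    rw [hN, Module.End.mem_eigenspace_iff, one_smul]
  have hinv : ∀ a : A, ∀ m ∈ N, ρ a m ∈ N := by
    intro a m hm
    rw [hmemN] at hm
    have hsplit : a = (a - e * a) + e * a := by abel
    have hB : ρ (a - e * a) m = 0 := by
      apply lemB _ _ _ hm
      have h' : e * (e * a) = e * a := by
        rw [hcomm e (e*a), hcomm e a, hidem]
      rw [mul_sub, h', sub_self]
    have hC : ρ e (ρ (e * a) m) = ρ (e * a) m := by
      apply lemC _ _ _ hm
      rw [hcomm e (e*a), hcomm e a, hidem]
    have hsum : ρ a m = ρ (e * a) m := by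
      conv_lhs => rw [hsplit]
      rw [map_add, LinearMap.add_apply, hB, zero_add]
    rw [hmemN, hsum]
    exact hC
  rcases hirr.2 N hinv with hbot | htop
  · left
    ext m
    simp only [Submodule.mem_top, iff_true, Module.End.mem_eigenspace_iff, zero_smul]
    have hmem : ρ e m ∈ N := (hmemN _).mpr (hee m)
    rw [hbot] at hmem
    simpa using hmem
  · right
    exact htop
end

section
/- Let A be a generalized almost-Jordan algebra for (β, γ) with β + γ = 0 (and γ ≠ 0). Let e ≠ 0 be an idempotent of A, set A₀ = {x ∈ A : ex = 0}, and let ρ : A → End_F(M) be an irreducible representation of A. If A₀·A₀ ⊆ A₀ and ρ_e ≠ 0, then M is an associative module: for all a, b ∈ A and m ∈ M, ρ_{ab}(m) = ρ_a(ρ_b(m)) and ρ_b(ρ_a(m)) = ρ_a(ρ_b(m)). -/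
private lemma cancel2 {F M : Type*} [Field F] [AddCommGroup M] [Module F M]
    (h2 : (2:F) ≠ 0) {v w : M} (h : v + v = w + w) : v = w := by
  have : (2:F) • v = (2:F) • w := by rw [two_smul, two_smul]; exact h
  exact smul_right_injective M h2 this

private lemma cancel3 {F M : Type*} [Field F] [AddCommGroup M] [Module F M]
    (h3 : (3:F) ≠ 0) {v w : M} (h : v + v + v = w + w + w) : v = w := by
  have : (3:F) • v = (3:F) • w := by
    rw [show (3:F) = 2 + 1 by norm_num, add_smul, add_smul, two_smul, two_smul, one_smul, one_smul]
    linear_combination (norm := module) h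
  exact smul_right_injective M h3 this

private lemma polar2 {F A M : Type*} [Field F] [AddCommGroup M] [Module F M] [Add A]
    (h2 : (2:F) ≠ 0) (T : A → A → M)
    (ha : ∀ a a' b, T (a + a') b = T a b + T a' b)
    (hb : ∀ a b b', T a (b + b') = T a b + T a b')
    (hsym : ∀ a b, T a b = T b a)
    (hz : ∀ x, T x x = 0) : ∀ x z, T x z = 0 := by
  intro x z
  have h := hz (x + z)
  rw [ha, hb, hb, hz, hz] at h
  apply cancel2 h2 (w := 0)
  rw [add_zero]
  linear_combination (norm := module) h - hsym z x

private lemma polar3 {F A M : Type*} [Field F] [AddCommGroup M] [Module F M] [Add A]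
    (h2 : (2:F) ≠ 0) (T : A → A → A → M)
    (ha : ∀ a a' b c, T (a + a') b c = T a b c + T a' b c)
    (hb : ∀ a b b' c, T a (b + b') c = T a b c + T a b' c)
    (hc : ∀ a b c c', T a b (c + c') = T a b c + T a b c')
    (hsym : ∀ a b c, T a b c = T b a c)
    (hz : ∀ x, T x x x = 0) :
    ∀ x z w, T x z w + T x w z + T z w x = 0 := by
  have hE : ∀ x z, T x x z + T x z x + T z x x + (T x z z + T z x z + T z z x) = 0 := by
    intro x z
    have h := hz (x + z)
    simp only [ha, hb, hc, hz] at h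
    linear_combination (norm := module) h
  intro x z w
  have h1 := hE (x + w) z
  simp only [ha, hb, hc] at h1
  apply cancel2 h2 (w := 0)
  rw [add_zero]
  linear_combination (norm := module) h1 - hE x z - hE w z - hsym w x z - hsym z x w - hsym w z x

private lemma gaj_reduce {F X : Type*} [Field F] [AddCommGroup X] [Module F X]
    {β γ : F} (hβ : β = -γ) (hγ : γ ≠ 0) {mul : X → X → X}
    (h : IsGAJ F β γ mul) :
    ∀ x y, mul y (mul (mul x x) x) = mul (mul y (mul x x)) x := by
  intro x y
  have h0 := h x y
  rw [hβ] at h0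
  have h1 : γ • (mul y (mul (mul x x) x) - mul (mul y (mul x x)) x) = 0 := by
    linear_combination (norm := module) h0
  rcases smul_eq_zero.mp h1 with h | h
  · exact absurd h hγ
  · exact sub_eq_zero.mp h

theorem stmt14 {F : Type*} [Field F] [Infinite F]
    (hchar2 : (2 : F) ≠ 0) (hchar3 : (3 : F) ≠ 0)
    {A M : Type*} [NonUnitalNonAssocRing A] [Module F A]
    [SMulCommClass F A A] [IsScalarTower F A A]
    [AddCommGroup M] [Module F M]
    {β γ : F} (hβγ : (β, γ) ≠ (0, 0))
    (hcomm : ∀ x y : A, x * y = y * x)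
    (hA : IsGAJ F β γ (fun x y : A => x * y))
    (ρ : A →ₗ[F] Module.End F M)
    (hβγ0 : β + γ = 0) (hγ : γ ≠ 0)
    (e : A) (he : e * e = e) (hne : e ≠ 0)
    (hρ : IsRep F β γ ρ) (hirr : IsIrreducibleRep F ρ)
    (hA0 : ∀ a b : A, e * a = 0 → e * b = 0 → e * (a * b) = 0)
    (hρe : ρ e ≠ 0) :
    ∀ a b : A, ∀ m : M, ρ (a * b) m = ρ a (ρ b m) ∧ ρ b (ρ a m) = ρ a (ρ b m) := by

  have hβ : β = -γ := eq_neg_of_add_eq_zero_left hβγ0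
  have halg : ∀ x y : A, y * ((x*x)*x) = (y*(x*x))*x := gaj_reduce hβ hγ hA
  have hrepM : ∀ (x y : A) (m n : M),
      ρ y (ρ (x*x) m + ρ x (ρ x m + ρ x m)) + ρ ((x*x)*x) n
        = ρ (y*(x*x)) m + ρ x (ρ y (ρ x m + ρ x m) + ρ (x*x) n) := by
    intro x y m n
    have h := congrArg Prod.snd (gaj_reduce hβ hγ hρ (x, m) (y, n))
    simpa [sneMul] using h
  have hrep1 : ∀ (x : A) (n : M), ρ ((x*x)*x) n = ρ x (ρ (x*x) n) := by
    intro x n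
    have h := hrepM x x 0 n
    simpa using h
  have hrep2 : ∀ (x y : A) (m : M),
      ρ y (ρ (x*x) m) + (ρ y (ρ x (ρ x m)) + ρ y (ρ x (ρ x m)))
        = ρ (y*(x*x)) m + (ρ x (ρ y (ρ x m)) + ρ x (ρ y (ρ x m))) := by
    intro x y m
    have h := hrepM x y m 0
    simp only [map_zero, add_zero, map_add] at h
    linear_combination (norm := module) h
  -- trilinear linearization of hrep1
  have L1 : ∀ (x z w : A) (n : M),
      (ρ ((x*z)*w) n - ρ w (ρ (x*z) n)) + (ρ ((x*w)*z) n - ρ z (ρ (x*w) n))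
        + (ρ ((z*w)*x) n - ρ x (ρ (z*w) n)) = 0 := by
    intro x z w n
    exact polar3 hchar2 (fun a b c => ρ ((a*b)*c) n - ρ c (ρ (a*b) n))
      (by intro a a' b c; simp only [add_mul, mul_add, map_add, LinearMap.add_apply]; abel)
      (by intro a b b' c; simp only [add_mul, mul_add, map_add, LinearMap.add_apply]; abel)
      (by intro a b c c'; simp only [add_mul, mul_add, map_add, LinearMap.add_apply]; abel)
      (by intro a b c; rw [hcomm a b])
      (by intro u; rw [hrep1 u n, sub_self]) x z w
  -- bilinear linearization of hrep2
  have L2 : ∀ (y x z : A) (m : M),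
      ρ y (ρ (x*z) m) + ρ y (ρ x (ρ z m)) + ρ y (ρ z (ρ x m))
        = ρ (y*(x*z)) m + ρ x (ρ y (ρ z m)) + ρ z (ρ y (ρ x m)) := by
    intro y x z m
    have h := polar2 hchar2 (fun x z =>
        (ρ y (ρ (x*z) m) + ρ y (ρ x (ρ z m)) + ρ y (ρ z (ρ x m)))
          - (ρ (y*(x*z)) m + ρ x (ρ y (ρ z m)) + ρ z (ρ y (ρ x m))))
      (by intro a a' b; simp only [add_mul, mul_add, map_add, LinearMap.add_apply]; abel)
      (by intro a b b'; simp only [add_mul, mul_add, map_add, LinearMap.add_apply]; abel)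
      (by intro a b; rw [hcomm a b]; abel)
      (by intro u; rw [sub_eq_zero]; linear_combination (norm := module) hrep2 u y m) x z
    rw [sub_eq_zero] at h
    exact h
  have hPP : ∀ n : M, ρ e (ρ e n) = ρ e n := by
    intro n
    have h := hrep1 e n
    simp only [he] at h
    exact h.symm
  have hLL : ∀ a : A, e * (e * a) = e * a := by
    intro a
    have h := halg e a
    simp only [he] at h
    calc e * (e * a) = e * (a * e) := by rw [hcomm e a]
      _ = (a * e) * e := hcomm _ _
      _ = a * e := h.symm
      _ = e * a := hcomm _ _
  have R0 : ∀ a : A, e * a = 0 → ∀ n : M, ρ a (ρ e n) = 0 := by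
    intro a ha n
    have h := L1 e e a n
    simp only [he, ha, zero_mul, map_zero, LinearMap.zero_apply] at h
    linear_combination (norm := module) -h
  have R1 : ∀ a : A, e * a = a → ∀ n : M,
      ρ a n + (ρ a n + ρ a n) = ρ a (ρ e n) + (ρ e (ρ a n) + ρ e (ρ a n)) := by
    intro a ha n
    have hae : a * e = a := by rw [hcomm]; exact ha
    have h := L1 e e a n
    simp only [he, ha, hae] at h
    linear_combination (norm := module) h
  have R2a : ∀ a : A, e * a = a → ∀ m : M,
      ρ e (ρ a m) + ρ e (ρ a (ρ e m)) = ρ a m + ρ a (ρ e m) := by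
    intro a ha m
    have h := L2 e e a m
    simp only [ha, hPP] at h
    linear_combination (norm := module) h
  have hA1 : ∀ a : A, e * a = a → ∀ n : M,
      ρ e (ρ a n) = ρ a n ∧ ρ a (ρ e n) = ρ a n := by
    intro a ha n
    have F1 : ρ a (ρ e n) = ρ e (ρ a (ρ e n)) := by
      have h := R1 a ha (ρ e n)
      simp only [hPP] at h
      exact cancel2 hchar2 (by linear_combination (norm := module) h)
    have F2 : ρ e (ρ a n) = ρ e (ρ a (ρ e n)) := by
      have h := congrArg (ρ e) (R1 a ha n)
      simp only [map_add, hPP] at h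
      linear_combination (norm := module) h
    have r2 := R2a a ha n
    constructor
    · linear_combination (norm := module) r2 + F1
    · linear_combination (norm := module) r2 + (2:F) • F1 - F2
  obtain ⟨-, hirr2⟩ := hirr
  have hPid : ∀ m : M, ρ e m = m := by
    have hinv : ∀ (a : A), ∀ m ∈ LinearMap.range (ρ e), ρ a m ∈ LinearMap.range (ρ e) := by
      intro a m hm
      obtain ⟨n, rfl⟩ := hm
      have hsplit : ρ a (ρ e n) = ρ (a - e*a) (ρ e n) + ρ (e*a) (ρ e n) := by
        rw [← LinearMap.add_apply, ← map_add, sub_add_cancel]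
      rw [hsplit]
      rw [R0 _ (by rw [mul_sub, hLL, sub_self]) _, zero_add]
      exact ⟨_, (hA1 (e*a) (hLL a) (ρ e n)).1⟩
    rcases hirr2 _ hinv with h | h
    · exfalso
      apply hρe
      ext n
      have hn : ρ e n ∈ LinearMap.range (ρ e) := ⟨n, rfl⟩
      rw [h] at hn
      simpa using hn
    · intro m
      have hm : m ∈ LinearMap.range (ρ e) := by rw [h]; trivial
      obtain ⟨n, hn⟩ := hm
      rw [← hn, hPP]
  have hA0z : ∀ a : A, e * a = 0 → ∀ m : M, ρ a m = 0 := by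
    intro a ha m
    have h := R0 a ha m
    rwa [hPid] at h
  have hI : ∀ a b : A, e * a = 0 → e * b = b → ∀ m : M, ρ (a*b) m = 0 := by
    intro a b ha hb m
    have hae : a * e = 0 := by rw [hcomm]; exact ha
    have hbe : b * e = b := by rw [hcomm]; exact hb
    have key : ρ ((a*b)*e) m = 0 := by
      have h := L1 a b e m
      simp only [hae, hbe, zero_mul, map_zero, LinearMap.zero_apply, hPid] at h
      rw [hcomm b a, hA0z a ha] at h
      linear_combination (norm := module) h
    have h1 : ρ (a*b - e*(a*b)) m = 0 := hA0z _ (by rw [mul_sub, hLL, sub_self]) m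
    have h2 : ρ (e*(a*b)) m = 0 := by rw [hcomm]; exact key
    have hsplit : ρ (a*b) m = ρ (a*b - e*(a*b)) m + ρ (e*(a*b)) m := by
      rw [← LinearMap.add_apply, ← map_add, sub_add_cancel]
    rw [hsplit, h1, h2, add_zero]
  have key2 : ∀ a b : A, e * b = b → ∀ m : M,
      ρ a (ρ b m) + ρ a (ρ b m) = ρ (a*b) m + ρ b (ρ a m) := by
    intro a b hb m
    have h := L2 a e b m
    simp only [hb, hPid] at h
    linear_combination (norm := module) h
  have hJ : ∀ a b : A, e * a = a → e * b = b → ∀ m : M,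
      ρ a (ρ b m) = ρ b (ρ a m) ∧ ρ (a*b) m = ρ a (ρ b m) := by
    intro a b ha hb m
    have h1 := key2 a b hb m
    have h2 := key2 b a ha m
    rw [hcomm b a] at h2
    have hcom : ρ a (ρ b m) = ρ b (ρ a m) :=
      cancel3 hchar3 (by linear_combination (norm := module) h1 - h2)
    exact ⟨hcom, by linear_combination (norm := module) -h1 + hcom⟩
  intro a b m
  have ha1 : e*(e*a) = e*a := hLL a
  have hb1 : e*(e*b) = e*b := hLL b
  have ha0 : e*(a - e*a) = 0 := by rw [mul_sub, hLL, sub_self]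
  have hb0 : e*(b - e*b) = 0 := by rw [mul_sub, hLL, sub_self]
  have hρa : ∀ n : M, ρ a n = ρ (e*a) n := by
    intro n
    have hsplit : ρ a n = ρ (a - e*a) n + ρ (e*a) n := by
      rw [← LinearMap.add_apply, ← map_add, sub_add_cancel]
    rw [hsplit, hA0z _ ha0, zero_add]
  have hρb : ∀ n : M, ρ b n = ρ (e*b) n := by
    intro n
    have hsplit : ρ b n = ρ (b - e*b) n + ρ (e*b) n := by
      rw [← LinearMap.add_apply, ← map_add, sub_add_cancel]
    rw [hsplit, hA0z _ hb0, zero_add]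
  have hab : a*b = (a-e*a)*(b-e*b) + ((a-e*a)*(e*b) + ((e*a)*(b-e*b) + (e*a)*(e*b))) := by
    conv_lhs => rw [← sub_add_cancel a (e*a), ← sub_add_cancel b (e*b)]
    rw [add_mul, mul_add, mul_add]
    abel
  have hρab : ρ (a*b) m = ρ ((e*a)*(e*b)) m := by
    rw [hab]
    simp only [map_add, LinearMap.add_apply]
    rw [hA0z _ (hA0 _ _ ha0 hb0) m, hI _ _ ha0 hb1 m,
      hcomm (e*a) (b - e*b), hI _ _ hb0 ha1 m]
    abel
  obtain ⟨hcom, hmul⟩ := hJ (e*a) (e*b) ha1 hb1 m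
  constructor
  · rw [hρab, hρb m, hρa (ρ (e*b) m)]
    exact hmul
  · rw [hρa m, hρb m, hρb (ρ (e*a) m), hρa (ρ (e*b) m)]
    exact hcom.symm
end

section
/- Let A be a generalized almost-Jordan algebra for (β, γ) with β + 2γ = 0 (and γ ≠ 0). Let e ≠ 0 be an idempotent of A and let ρ : A → End_F(M) be an irreducible representation of A. Then M = M₀ or M = M₁, where M₀ = {m ∈ M : ρ_e(m) = 0} and M₁ = {m ∈ M : (ρ_e − id)²(m) = 0}. -/
/-- Auxiliary cancellation: when `β + 2γ = 0` and `γ ≠ 0`, the generalized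
almost-Jordan identity reduces to `v - 2u + w = 0`. -/
lemma gaj_cancel {F : Type*} [Field F] {M : Type*} [AddCommGroup M] [Module F M]
    {β γ : F} (hβ2γ0 : β + 2 * γ = 0) (hγ : γ ≠ 0) {u v w : M}
    (h : β • (u - w) + γ • (v - w) = 0) : v - (2:F) • u + w = 0 := by
  have hβ : β = -(2 * γ) := by linear_combination hβ2γ0
  rw [hβ] at h
  have h2 : γ • (v - (2:F) • u + w) = -(2 * γ) • (u - w) + γ • (v - w) := by module
  rw [h] at h2
  exact (smul_eq_zero.mp h2).resolve_left hγ

theorem stmt15 {F : Type*} [Field F] [Infinite F]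
    (hchar2 : (2 : F) ≠ 0) (hchar3 : (3 : F) ≠ 0)
    {A M : Type*} [NonUnitalNonAssocRing A] [Module F A]
    [SMulCommClass F A A] [IsScalarTower F A A]
    [AddCommGroup M] [Module F M]
    {β γ : F} (hβγ : (β, γ) ≠ (0, 0))
    (hcomm : ∀ x y : A, x * y = y * x)
    (hA : IsGAJ F β γ (fun x y : A => x * y))
    (ρ : A →ₗ[F] Module.End F M)
    (hβ2γ0 : β + 2 * γ = 0) (hγ : γ ≠ 0)
    (e : A) (he : e * e = e) (hne : e ≠ 0)
    (hρ : IsRep F β γ ρ) (hirr : IsIrreducibleRep F ρ) :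
    Module.End.eigenspace (ρ e) 0 = ⊤ ∨
    LinearMap.ker ((ρ e - 1) ∘ₗ (ρ e - 1)) = ⊤ := by
  classical
  -- cleaned identity on A : y x³ - 2 (y x²) x + ((y x) x) x = 0
  have cleanA : ∀ x y : A,
      y * ((x * x) * x) - (2:F) • ((y * (x * x)) * x) + ((y * x) * x) * x = 0 :=
    fun x y => gaj_cancel hβ2γ0 hγ (hA x y)
  -- cleaned identity on the split null extension, second component
  have cleanM : ∀ p q : A × M,
      (sneMul F ρ q (sneMul F ρ (sneMul F ρ p p) p)).2
        - (2:F) • (sneMul F ρ (sneMul F ρ q (sneMul F ρ p p)) p).2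
        + (sneMul F ρ (sneMul F ρ (sneMul F ρ q p) p) p).2 = 0 := by
    intro p q
    apply gaj_cancel hβ2γ0 hγ
    have h2 := congrArg Prod.snd (hρ p q)
    simpa using h2
  -- module element in the `y` slot
  have hMy : ∀ (x : A) (m : M),
      ρ ((x * x) * x) m - (2:F) • (ρ x (ρ (x * x) m)) + ρ x (ρ x (ρ x m)) = 0 := by
    intro x m
    have h := cleanM (x, 0) (0, m)
    simp [sneMul] at h
    linear_combination (norm := module) h
  -- module element in the `x` slot
  have hMx : ∀ (x b : A) (m : M),
      ρ b (ρ (x * x) m) + (2:F) • (ρ b (ρ x (ρ x m)))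
        - (2:F) • (ρ (b * (x * x)) m) - (4:F) • (ρ x (ρ b (ρ x m)))
        + ρ ((b * x) * x) m + ρ x (ρ (b * x) m) + ρ x (ρ x (ρ b m)) = 0 := by
    intro x b m
    have h := cleanM (x, m) (b, 0)
    simp [sneMul] at h
    linear_combination (norm := module) h
  -- the operator cubic relation T(T-1)² = 0
  have hp3 : ∀ v : M, ρ e (ρ e (ρ e v)) = (2:F) • (ρ e (ρ e v)) - ρ e v := by
    intro v
    have h := hMy e v
    simp only [he] at h
    linear_combination (norm := module) h
  -- linearization of hMy at x = e + t a, degree 1 coefficient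
  have hLin : ∀ (a : A) (m : M),
      ρ ((e * e) * a) m + ρ ((e * a) * e) m + ρ ((a * e) * e) m
        - (2:F) • (ρ a (ρ (e * e) m)) - (2:F) • (ρ e (ρ (e * a) m))
        - (2:F) • (ρ e (ρ (a * e) m))
        + ρ a (ρ e (ρ e m)) + ρ e (ρ a (ρ e m)) + ρ e (ρ e (ρ a m)) = 0 := by
    intro a m
    have hpa := hMy (e + a) m
    have hma := hMy (e - a) m
    have haa := hMy a m
    have key : (2:F) • (ρ ((e * e) * a) m + ρ ((e * a) * e) m + ρ ((a * e) * e) m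
          - (2:F) • (ρ a (ρ (e * e) m)) - (2:F) • (ρ e (ρ (e * a) m))
          - (2:F) • (ρ e (ρ (a * e) m))
          + ρ a (ρ e (ρ e m)) + ρ e (ρ a (ρ e m)) + ρ e (ρ e (ρ a m))) =
        (ρ (((e + a) * (e + a)) * (e + a)) m
            - (2:F) • (ρ (e + a) (ρ ((e + a) * (e + a)) m))
            + ρ (e + a) (ρ (e + a) (ρ (e + a) m)))
        - (ρ (((e - a) * (e - a)) * (e - a)) m
            - (2:F) • (ρ (e - a) (ρ ((e - a) * (e - a)) m))
            + ρ (e - a) (ρ (e - a) (ρ (e - a) m)))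
        - (2:F) • (ρ ((a * a) * a) m - (2:F) • (ρ a (ρ (a * a) m))
            + ρ a (ρ a (ρ a m))) := by
      simp only [mul_add, add_mul, mul_sub, sub_mul, map_add, map_sub,
        LinearMap.add_apply, LinearMap.sub_apply]
      module
    rw [hpa, hma, haa] at key
    simp only [smul_zero, sub_zero] at key
    exact (smul_eq_zero.mp key).resolve_left hchar2
  -- normalized linearization
  have hLin' : ∀ (a : A) (m : M),
      ρ (e * a) m + (2:F) • (ρ ((e * a) * e) m) - (2:F) • (ρ a (ρ e m))
        - (4:F) • (ρ e (ρ (e * a) m))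
        + ρ a (ρ e (ρ e m)) + ρ e (ρ a (ρ e m)) + ρ e (ρ e (ρ a m)) = 0 := by
    intro a m
    have h := hLin a m
    rw [he, hcomm a e] at h
    linear_combination (norm := module) h
  -- the kernel of ρ e is invariant
  have hinv : ∀ (a : A) (m : M), ρ e m = 0 → ρ e (ρ a m) = 0 := by
    intro a m hm
    have hstar : ∀ b : A, ρ e (ρ e (ρ b m)) =
        (5:F) • (ρ (e * b) m) - (6:F) • (ρ e (ρ (e * b) m)) := by
      intro b
      have h1 := hLin' b m
      have h2 := hMx e b m
      rw [he, hcomm b e] at h2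
      rw [hm] at h1 h2
      simp only [map_zero, smul_zero, sub_zero, add_zero, zero_add] at h1 h2
      linear_combination (norm := module) (2:F) • h2 - h1
    have hL : e * (e * (e * a)) = (2:F) • (e * (e * a)) - e * a := by
      have h := cleanA e a
      simp only [he] at h
      rw [hcomm a e, hcomm (e * a) e, hcomm (e * (e * a)) e] at h
      linear_combination (norm := module) h
    have s0 := hstar a
    have s1 := hstar (e * a)
    have s2' := hstar (e * (e * a))
    have s2 : ρ e (ρ e (ρ (e * (e * a)) m)) =
        (10:F) • (ρ (e * (e * a)) m) - (5:F) • (ρ (e * a) m)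
          - (12:F) • (ρ e (ρ (e * (e * a)) m)) + (6:F) • (ρ e (ρ (e * a) m)) := by
      rw [hL] at s2'
      simp only [map_sub, map_smul, LinearMap.sub_apply, LinearMap.smul_apply] at s2'
      linear_combination (norm := module) s2'
    have s0a : ρ e (ρ e (ρ e (ρ a m))) =
        (5:F) • (ρ e (ρ (e * a) m)) - (6:F) • (ρ e (ρ e (ρ (e * a) m))) := by
      rw [s0]; simp only [map_sub, map_smul]
    have s0b : ρ e (ρ e (ρ e (ρ e (ρ a m)))) =
        (5:F) • (ρ e (ρ e (ρ (e * a) m)))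
          - (6:F) • (ρ e (ρ e (ρ e (ρ (e * a) m)))) := by
      rw [s0a]; simp only [map_sub, map_smul]
    have s1a : ρ e (ρ e (ρ e (ρ (e * a) m))) =
        (5:F) • (ρ e (ρ (e * (e * a)) m))
          - (6:F) • (ρ e (ρ e (ρ (e * (e * a)) m))) := by
      rw [s1]; simp only [map_sub, map_smul]
    have s1b : ρ e (ρ e (ρ e (ρ e (ρ (e * a) m)))) =
        (5:F) • (ρ e (ρ e (ρ (e * (e * a)) m)))
          - (6:F) • (ρ e (ρ e (ρ e (ρ (e * (e * a)) m)))) := by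
      rw [s1a]; simp only [map_sub, map_smul]
    have s2a : ρ e (ρ e (ρ e (ρ (e * (e * a)) m))) =
        (10:F) • (ρ e (ρ (e * (e * a)) m)) - (5:F) • (ρ e (ρ (e * a) m))
          - (12:F) • (ρ e (ρ e (ρ (e * (e * a)) m)))
          + (6:F) • (ρ e (ρ e (ρ (e * a) m))) := by
      have h := congrArg (⇑(ρ e)) s2
      simp only [map_sub, map_smul, map_add] at h
      exact h
    have p00 := hp3 (ρ a m)
    have p01 := hp3 (ρ e (ρ a m))
    have p10 := hp3 (ρ (e * a) m)
    have p11 := hp3 (ρ e (ρ (e * a) m))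
    have p20 := hp3 (ρ (e * (e * a)) m)
    have final : (4:F) • (ρ e (ρ a m)) = 0 := by
      linear_combination (norm := module)
        (-2:F) • s0 + (16:F) • s0a + (-10:F) • s0b
          + (4:F) • s1 + (-9:F) • s1a + (2:F) • s1b
          + (-2:F) • s2 + (3:F) • s2a
          + (4:F) • p00 + (10:F) • p01 + (65:F) • p10 + (-2:F) • p11 + (-15:F) • p20
    have h4 : (4:F) ≠ 0 := by
      have h22 : (4:F) = 2 * 2 := by norm_num
      rw [h22]
      exact mul_ne_zero hchar2 hchar2
    exact (smul_eq_zero.mp final).resolve_left h4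
  -- assemble, using irreducibility
  have hInv : ∀ a : A, ∀ m' ∈ LinearMap.ker (ρ e), ρ a m' ∈ LinearMap.ker (ρ e) := by
    intro a m' hm'
    exact LinearMap.mem_ker.mpr (hinv a m' (LinearMap.mem_ker.mp hm'))
  rcases hirr.2 (LinearMap.ker (ρ e)) hInv with hbot | htop
  · right
    rw [eq_top_iff]
    intro m _
    rw [LinearMap.mem_ker, LinearMap.comp_apply]
    have hv : ρ e ((ρ e - 1) ((ρ e - 1) m)) = 0 := by
      simp only [LinearMap.sub_apply, Module.End.one_apply, map_sub]
      linear_combination (norm := module) hp3 m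
    have hmem : (ρ e - 1) ((ρ e - 1) m) ∈ LinearMap.ker (ρ e) := LinearMap.mem_ker.mpr hv
    rw [hbot] at hmem
    simpa using hmem
  · left
    rw [Module.End.eigenspace_zero]
    exact htop
end

section
/- Let A be the 2-dimensional commutative ℝ-algebra with basis {e, a} and multiplication e² = e, ea = ae = 0, a² = e. Let M be a 2-dimensional real vector space with basis {v, w} and let ρ : A → End(M) be the linear map determined by ρ(e) = 0 and ρ(a)(λ₁v + λ₂w) = (2λ₂ − λ₁)v + (λ₂ − λ₁)w. Then ρ is a representation of A as a generalized almost-Jordan algebra for (β, γ) = (1, −1), and M is an irreducible module, i.e. the only subspaces N ⊆ M with ρ(x)(N) ⊆ N for all x ∈ A are {0} and M. -/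
/-- The multiplication of the commutative algebra `A = ℝe ⊕ ℝa` with
`e = (1,0)`, `a = (0,1)`, `e² = e`, `ea = ae = 0`, `a² = e`. -/
def exMul : ℝ × ℝ → ℝ × ℝ → ℝ × ℝ := fun x y => (x.1 * y.1 + x.2 * y.2, 0)

/-- The endomorphism of `M = ℝv ⊕ ℝw` given by
`λ₁v + λ₂w ↦ (2λ₂ − λ₁)v + (λ₂ − λ₁)w`. -/
noncomputable def exT : Module.End ℝ (ℝ × ℝ) where
  toFun m := (2 * m.2 - m.1, m.2 - m.1)
  map_add' x y := by simp [Prod.ext_iff]; constructor <;> ring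
  map_smul' c x := by simp [Prod.ext_iff]; constructor <;> ring

/-- The linear map `ρ : A → End(M)` with `ρ(e) = 0` and `ρ(a) = exT`. -/
noncomputable def exρ : (ℝ × ℝ) →ₗ[ℝ] Module.End ℝ (ℝ × ℝ) where
  toFun x := x.2 • exT
  map_add' x y := by simp [add_smul]
  map_smul' c x := by simp [smul_smul]

lemma exρ_apply (x m : ℝ × ℝ) :
    exρ x m = (x.2 * (2 * m.2 - m.1), x.2 * (m.2 - m.1)) := by
  simp [exρ, exT, Prod.smul_def]

theorem stmt16 :
    -- multiplication table of `A` on the basis `e = (1,0)`, `a = (0,1)`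
    exMul (1, 0) (1, 0) = (1, 0) ∧ exMul (1, 0) (0, 1) = 0 ∧
    exMul (0, 1) (1, 0) = 0 ∧ exMul (0, 1) (0, 1) = (1, 0) ∧
    (∀ x y : ℝ × ℝ, exMul x y = exMul y x) ∧
    -- the action: `ρ(e) = 0` and `ρ(a)(λ₁v + λ₂w) = (2λ₂ − λ₁)v + (λ₂ − λ₁)w`
    exρ (1, 0) = 0 ∧
    (∀ l1 l2 : ℝ, exρ (0, 1) (l1, l2) = (2 * l2 - l1, l2 - l1)) ∧
    -- `ρ` is a representation of `A` for `(β, γ) = (1, −1)`: the split null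
    -- extension `A ⊕ M` satisfies the generalized almost-Jordan identity
    IsGAJ ℝ 1 (-1) (fun p q : (ℝ × ℝ) × (ℝ × ℝ) =>
      (exMul p.1 q.1, exρ p.1 q.2 + exρ q.1 p.2)) ∧
    -- `M` is an irreducible module
    (∀ N : Submodule ℝ (ℝ × ℝ),
      (∀ x : ℝ × ℝ, ∀ m ∈ N, exρ x m ∈ N) → N = ⊥ ∨ N = ⊤) := by
  refine ⟨by simp [exMul], by simp [exMul, Prod.ext_iff], by simp [exMul, Prod.ext_iff],
    by simp [exMul], ?_, ?_, ?_, ?_, ?_⟩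
  · intro x y; simp [exMul]; ring
  · ext m <;> simp [exρ_apply]
  · intro l1 l2; simp [exρ_apply]
  · intro x y
    obtain ⟨⟨x1, x2⟩, ⟨x3, x4⟩⟩ := x
    obtain ⟨⟨y1, y2⟩, ⟨y3, y4⟩⟩ := y
    simp only [exMul, exρ_apply, Prod.smul_def, Prod.mk_add_mk, Prod.mk_sub_mk,
      smul_eq_mul, Prod.ext_iff, Prod.fst_add, Prod.snd_add]
    norm_num
    refine ⟨by ring, by ring, by ring⟩
  · intro N hN
    rcases eq_or_ne N ⊥ with h | h
    · exact Or.inl h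
    right
    obtain ⟨m, hmN, hm0⟩ := Submodule.exists_mem_ne_zero_of_ne_bot h
    obtain ⟨m1, m2⟩ := m
    have hTm : ((2 * m2 - m1, m2 - m1) : ℝ × ℝ) ∈ N := by
      have := hN (0, 1) _ hmN
      rw [exρ_apply] at this
      simpa using this
    have hd : ((m1 - m2) ^ 2 + m2 ^ 2 : ℝ) ≠ 0 := by
      intro h0
      have h1 : m1 - m2 = 0 ∧ m2 = 0 := by
        constructor <;> nlinarith [sq_nonneg (m1 - m2), sq_nonneg m2]
      apply hm0
      have : m2 = 0 := h1.2
      have : m1 = 0 := by linarith [h1.1, h1.2]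
      simp [Prod.ext_iff, this, h1.2]
    rw [Submodule.eq_top_iff']
    intro z
    obtain ⟨z1, z2⟩ := z
    set d : ℝ := (m1 - m2) ^ 2 + m2 ^ 2
    have key : (z1, z2) = ((z2 * (2 * m2 - m1) - z1 * (m2 - m1)) / d) • ((m1, m2) : ℝ × ℝ)
        + ((m2 * z1 - m1 * z2) / d) • ((2 * m2 - m1, m2 - m1) : ℝ × ℝ) := by
      simp only [Prod.smul_def, smul_eq_mul, Prod.mk_add_mk, Prod.ext_iff]
      constructor <;> (field_simp; ring)
    rw [key]
    exact N.add_mem (N.smul_mem _ hmN) (N.smul_mem _ hTm)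
end

section
/- Let A be a generalized almost-Jordan algebra for (β, γ) and let ρ : A → End_F(M) be a representation of A. Then for all a, b ∈ A the following operator identity holds on M: (γ − β)(ρ_a∘ρ_b∘ρ_a + ρ_a∘ρ_{ab} − ρ_b∘ρ_a∘ρ_a − ρ_{(ab)a}) + (β + γ)(2 ρ_a∘ρ_a∘ρ_b − ρ_b∘ρ_{a²} − ρ_{a²b}) = 0, where a² = aa and ρ_x = ρ(x). -/
theorem stmt17 {F : Type*} [Field F] [Infinite F]
    (hchar2 : (2 : F) ≠ 0) (hchar3 : (3 : F) ≠ 0)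
    {A M : Type*} [NonUnitalNonAssocRing A] [Module F A]
    [SMulCommClass F A A] [IsScalarTower F A A]
    [AddCommGroup M] [Module F M]
    {β γ : F} (hβγ : (β, γ) ≠ (0, 0))
    (hcomm : ∀ x y : A, x * y = y * x)
    (hA : IsGAJ F β γ (fun x y : A => x * y))
    (ρ : A →ₗ[F] Module.End F M)
    (hρ : IsRep F β γ ρ) :
    ∀ a b : A,
      (γ - β) • (ρ a * ρ b * ρ a + ρ a * ρ (a * b) - ρ b * (ρ a * ρ a) - ρ ((a * b) * a)) +
        (β + γ) • ((2 : F) • (ρ a * ρ a * ρ b) - ρ b * ρ (a * a) - ρ ((a * a) * b)) = 0 := by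
  intro a b
  ext m
  have h1 := congrArg Prod.snd (hρ (a, m) (b, (0:M)))
  have h0p := congrArg Prod.snd (hρ (a + b, (0:M)) ((0:A), m))
  have h0m := congrArg Prod.snd (hρ (a - b, (0:M)) ((0:A), m))
  have h0b := congrArg Prod.snd (hρ (b, (0:M)) ((0:A), m))
  simp only [sneMul, mul_add, add_mul, mul_sub, sub_mul, Prod.snd_add, Prod.snd_sub,
    Prod.smul_snd, Prod.snd_zero, map_zero, map_add, map_sub, zero_add, add_zero,
    LinearMap.add_apply, LinearMap.sub_apply, LinearMap.zero_apply,
    hcomm b a, hcomm b (a*a)] at h1 h0p h0m h0b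
  simp only [Module.End.mul_apply, LinearMap.add_apply, LinearMap.sub_apply,
    LinearMap.smul_apply, LinearMap.zero_apply]
  refine smul_right_injective M hchar2 ?_
  simp only [smul_zero]
  linear_combination (norm := module) (-2:F) • h1 - h0p + h0m + (2:F) • h0b
end

section
/- Let A be a generalized almost-Jordan algebra for (β, γ) with β + 3γ ≠ 0, let e ≠ 0 be an idempotent of A with A₁ = {x ∈ A : ex = x}, and let ρ : A → End_F(M) be a representation of A such that ρ_e = id_M. Then for all a, b ∈ A₁ the operator identity ρ_{ab} + ρ_a∘ρ_b − 2 ρ_b∘ρ_a = 0 holds on M; consequently ρ_a∘ρ_b = ρ_b∘ρ_a and ρ_{ab} = ρ_a∘ρ_b for all a, b ∈ A₁. -/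
set_option maxHeartbeats 4000000 in
theorem stmt18 {F : Type*} [Field F] [Infinite F]
    (hchar2 : (2 : F) ≠ 0) (hchar3 : (3 : F) ≠ 0)
    {A M : Type*} [NonUnitalNonAssocRing A] [Module F A]
    [SMulCommClass F A A] [IsScalarTower F A A]
    [AddCommGroup M] [Module F M]
    {β γ : F} (hβγ : (β, γ) ≠ (0, 0))
    (hcomm : ∀ x y : A, x * y = y * x)
    (hA : IsGAJ F β γ (fun x y : A => x * y))
    (ρ : A →ₗ[F] Module.End F M)
    (hβ3γ : β + 3 * γ ≠ 0)
    (e : A) (he : e * e = e) (hne : e ≠ 0)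
    (hρ : IsRep F β γ ρ) (heid : ρ e = 1) :
    ∀ a b : A, e * a = a → e * b = b →
      (ρ (a * b) + ρ a * ρ b - (2 : F) • (ρ b * ρ a) = 0 ∧
        ρ a * ρ b = ρ b * ρ a ∧ ρ (a * b) = ρ a * ρ b) := by
  intro a b ha hb
  have hae : a * e = a := by rw [hcomm]; exact ha
  have hbe : b * e = b := by rw [hcomm]; exact hb
  have hba : b * a = a * b := hcomm b a
  have heab : e * (a * b) = a * b * e := hcomm e _
  have heabe : e * (a * b * e) = a * b * e * e := hcomm e _
  have heab2 : e * (a * b * (a * b)) = a * b * (a * b) * e := hcomm e _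
  have hperm : a * b * e * (a * b) = a * b * (a * b * e) := hcomm _ _
  have hE := fun (c d : A) (m : M) => congrArg Prod.snd (hρ (c, m) (d, 0))
  have hG := fun (c : A) (m : M) => congrArg Prod.snd (hρ (c, 0) (0, m))
  simp only [sneMul, Prod.smul_snd, Prod.snd_sub, Prod.snd_add, Prod.snd_zero, map_zero,
    LinearMap.zero_apply, zero_add, add_zero] at hE hG
  have huv : ∀ m : M, ρ a (ρ b m) = ρ b (ρ a m) := by
    intro m
    have h1 := hE (a + e) b m
    have h2 := hE a b m
    have h4 := hE (b + e) a m
    have h5 := hE b a m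
    simp only [mul_add, add_mul, map_add, LinearMap.add_apply, heid,
      Module.End.one_apply, he, ha, hb, hae, hbe, hba, heab] at h1 h2 h4 h5
    have hS : (3 * (β + 3 * γ)) • (ρ a (ρ b m) - ρ b (ρ a m)) = 0 := by
      linear_combination (norm := module) h4 - h5 - h1 + h2
    have hne3 : (3 * (β + 3 * γ)) ≠ 0 := mul_ne_zero hchar3 hβ3γ
    exact sub_eq_zero.mp ((smul_eq_zero.mp hS).resolve_left hne3)
  have hrs : ∀ m : M, ρ (a * b) m = ρ (a * b * e) m := by
    intro m
    have h1 := hE (a + e) b m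
    have h2 := hE a b m
    have g1 := hG (a + b + e) m
    have g2 := hG (a + b) m
    have g3 := hG (a + e) m
    have g4 := hG (b + e) m
    have g5 := hG a m
    have g6 := hG b m
    have h9 := hE e (a * b) m
    have g8 := hG (a * b + e) m
    have g9 := hG (e - a * b) m
    have g10 := hG (a * b) m
    simp only [mul_add, add_mul, mul_sub, sub_mul, map_add, map_sub, LinearMap.add_apply,
      LinearMap.sub_apply, heid, Module.End.one_apply, he, ha, hb, hae, hbe, hba, heab,
      heabe, heab2, hperm] at h1 h2 g1 g2 g3 g4 g5 g6 h9 g8 g9 g10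
    have hB : (2 * β) • (ρ (a * b) m - ρ (a * b * e) m) = 0 := by
      linear_combination (norm := module) (2:F) • h1 - (2:F) • h2
        + (g1 - g2 - g3 - g4 + g5 + g6) + (3 * β + 9 * γ) • (huv m)
    have hC : (2 * (γ * γ)) • (ρ (a * b) m - ρ (a * b * e) m) = 0 := by
      linear_combination (norm := module) (4 * γ) • h9 + (β + γ) • (g8 - g9)
        - (2 * (β + γ)) • g10 + (2 * β + 3 * γ) • hB
    rcases eq_or_ne β 0 with hb0 | hb0
    · have hγ : γ ≠ 0 := by intro h; exact hβ3γ (by rw [hb0, h]; ring)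
      exact sub_eq_zero.mp ((smul_eq_zero.mp hC).resolve_left (mul_ne_zero hchar2 (mul_ne_zero hγ hγ)))
    · exact sub_eq_zero.mp ((smul_eq_zero.mp hB).resolve_left (mul_ne_zero hchar2 hb0))
  have hru : ∀ m : M, ρ (a * b) m = ρ a (ρ b m) := by
    intro m
    have h1 := hE (a + e) b m
    have h2 := hE a b m
    simp only [mul_add, add_mul, map_add, LinearMap.add_apply, heid,
      Module.End.one_apply, he, ha, hb, hae, hbe, hba, heab] at h1 h2
    have hS : (β + 3 * γ) • (ρ (a * b) m - ρ a (ρ b m)) = 0 := by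
      linear_combination (norm := module) h2 - h1 - (2 * β + 6 * γ) • (huv m)
        + (β + γ) • (hrs m)
    exact sub_eq_zero.mp ((smul_eq_zero.mp hS).resolve_left hβ3γ)
  have hco : ρ a * ρ b = ρ b * ρ a := by
    ext m; simpa [Module.End.mul_apply] using huv m
  have hmul : ρ (a * b) = ρ a * ρ b := by
    ext m; simpa [Module.End.mul_apply] using hru m
  refine ⟨?_, hco, hmul⟩
  rw [hmul, hco]
  ext m
  simp only [LinearMap.add_apply, LinearMap.sub_apply, LinearMap.smul_apply,
    LinearMap.zero_apply, Module.End.mul_apply]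
  module
end
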